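/- arXiv:2502.14237 — 5 statements merged into one kernel-verified Lean document; each statement's English description precedes it below -/
import Mathlib

section
/- For a > 0, b ≥ 2, and p a homogeneous harmonic polynomial of degree b on ℝⁿ, Δ((1+|x|²)^{−a} p(x)) = −2a(2a+2)(1+|x|²)^{−a−2} p(x) − 2a(n−2a+2b−2)(1+|x|²)^{−a−1} p(x). -/
/-- The partial derivative `∂ᵢ f` on `ℝⁿ = EuclideanSpace ℝ (Fin n)`. -/
noncomputable def pd (n : ℕ) (i : Fin n) (f : EuclideanSpace ℝ (Fin n) → ℝ)
    (x : EuclideanSpace ℝ (Fin n)) : ℝ :=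
  fderiv ℝ f x (EuclideanSpace.single i 1)

/-- The Euclidean Laplacian `Δf = ∑ᵢ ∂ᵢ∂ᵢ f` on `ℝⁿ`. -/
noncomputable def lap (n : ℕ) (f : EuclideanSpace ℝ (Fin n) → ℝ)
    (x : EuclideanSpace ℝ (Fin n)) : ℝ :=
  ∑ i, pd n i (pd n i f) x

open scoped RealInnerProductSpace

noncomputable def ee (n : ℕ) (i : Fin n) : EuclideanSpace ℝ (Fin n) := EuclideanSpace.single i 1


lemma hasFDerivAt_q (n : ℕ) (x : EuclideanSpace ℝ (Fin n)) :
    HasFDerivAt (fun y : EuclideanSpace ℝ (Fin n) => 1 + ‖y‖^2) (2 • (innerSL ℝ x)) x := by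
  have h := ((hasFDerivAt_id x).inner ℝ (hasFDerivAt_id x)).const_add 1
  simp only [real_inner_self_eq_norm_sq] at h
  refine h.congr_fderiv ?_
  ext v
  simp [fderivInnerCLM_apply, two_smul, real_inner_comm]

lemma hasFDerivAt_qpow (n : ℕ) (c : ℝ) (x : EuclideanSpace ℝ (Fin n)) :
    HasFDerivAt (fun y : EuclideanSpace ℝ (Fin n) => (1 + ‖y‖^2) ^ c)
      ((c * (1 + ‖x‖^2) ^ (c-1)) • (2 • (innerSL ℝ x))) x :=
  (hasFDerivAt_q n x).rpow_const (Or.inl (by positivity))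

lemma qpow_eval (n : ℕ) (c : ℝ) (x : EuclideanSpace ℝ (Fin n)) (i : Fin n) :
    ((c * (1 + ‖x‖^2) ^ (c-1)) • (2 • (innerSL ℝ x))) (ee n i) =
      c * (1 + ‖x‖^2) ^ (c-1) * (2 * x i) := by
  simp [ee, EuclideanSpace.inner_single_right, mul_assoc]

section main
variable {n b : ℕ} {a : ℝ} {p : EuclideanSpace ℝ (Fin n) → ℝ}


lemma euler {n b : ℕ} {p : EuclideanSpace ℝ (Fin n) → ℝ}
    (hsmooth : ContDiff ℝ (⊤ : ℕ∞) p)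
    (hhom : ∀ (t : ℝ) (x : EuclideanSpace ℝ (Fin n)), p (t • x) = t ^ b * p x)
    (x : EuclideanSpace ℝ (Fin n)) :
    fderiv ℝ p x x = (b : ℝ) * p x := by
  have hγ : HasDerivAt (fun t : ℝ => t • x) x 1 := by
    simpa using (hasDerivAt_id (1:ℝ)).smul_const x
  have hp : HasFDerivAt p (fderiv ℝ p x) ((fun t : ℝ => t • x) 1) := by
    simpa using ((hsmooth.differentiable (by simp)) x).hasFDerivAt
  have h1 : HasDerivAt (p ∘ fun t : ℝ => t • x) (fderiv ℝ p x x) 1 :=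
    hp.comp_hasDerivAt 1 hγ
  have heq : (p ∘ fun t : ℝ => t • x) = fun t : ℝ => t ^ b * p x :=
    funext fun t => hhom t x
  rw [heq] at h1
  have h2 : HasDerivAt (fun t : ℝ => t ^ b * p x) ((b * (1:ℝ) ^ (b-1)) * p x) 1 :=
    (hasDerivAt_pow b 1).mul_const (p x)
  have := h1.unique h2
  simpa using this

lemma pdp_hasFDeriv (hsmooth : ContDiff ℝ (⊤ : ℕ∞) p) (i : Fin n)
    (x : EuclideanSpace ℝ (Fin n)) :
    HasFDerivAt (fun y => fderiv ℝ p y (ee n i))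
      ((ContinuousLinearMap.apply ℝ ℝ (ee n i)).comp (fderiv ℝ (fderiv ℝ p) x)) x := by
  have hC1 : Differentiable ℝ (fderiv ℝ p) :=
    ((contDiff_infty_iff_fderiv.mp hsmooth).2).differentiable (by simp)
  exact (ContinuousLinearMap.apply ℝ ℝ (ee n i)).hasFDerivAt.comp x (hC1 x).hasFDerivAt

lemma hProj (i : Fin n) (x : EuclideanSpace ℝ (Fin n)) :
    HasFDerivAt (fun y : EuclideanSpace ℝ (Fin n) => y i)
      (EuclideanSpace.proj (𝕜 := ℝ) i) x := by
  simpa using (EuclideanSpace.proj (𝕜 := ℝ) i).hasFDerivAt (x := x)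

lemma pdF_eq (hsmooth : ContDiff ℝ (⊤ : ℕ∞) p) (i : Fin n) :
    pd n i (fun y => (1+‖y‖^2)^(-a) * p y) = fun y =>
      (1+‖y‖^2)^(-a) * fderiv ℝ p y (ee n i)
      + (-2*a) * ((1+‖y‖^2)^(-a-1) * (y i * p y)) := by
  funext y
  have hp := ((hsmooth.differentiable (by simp)) y).hasFDerivAt
  have hF := (hasFDerivAt_qpow n (-a) y).mul hp
  show fderiv ℝ _ y (EuclideanSpace.single i 1) = _
  rw [(show HasFDerivAt (fun y => (1+‖y‖^2)^(-a) * p y) _ y from hF).fderiv]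
  simp only [ContinuousLinearMap.add_apply, ContinuousLinearMap.smul_apply, smul_eq_mul,
    innerSL_apply_apply]
  simp [ee, EuclideanSpace.inner_single_right]
  ring

lemma key (hsmooth : ContDiff ℝ (⊤ : ℕ∞) p) (i : Fin n) (x : EuclideanSpace ℝ (Fin n)) :
    pd n i (pd n i (fun y => (1+‖y‖^2)^(-a) * p y)) x =
      (1+‖x‖^2)^(-a) * (fderiv ℝ (fderiv ℝ p) x (ee n i) (ee n i))
      - 4*a*((1+‖x‖^2)^(-a-1)) * (x i * fderiv ℝ p x (ee n i))
      - 2*a*((1+‖x‖^2)^(-a-1)) * p x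
      + (2*a*(2*a+2)) * ((1+‖x‖^2)^(-a-2) * (x i^2 * p x)) := by
  have hp := ((hsmooth.differentiable (by simp)) x).hasFDerivAt
  have hA := (hasFDerivAt_qpow n (-a) x).mul (pdp_hasFDeriv hsmooth i x)
  have hB := ((hasFDerivAt_qpow n (-a-1) x).mul ((hProj i x).mul hp)).const_mul (-2*a)
  have hD := hA.add hB
  rw [show pd n i (fun y => (1+‖y‖^2)^(-a) * p y) = _ from pdF_eq hsmooth i]
  show fderiv ℝ _ x (EuclideanSpace.single i 1) = _
  rw [(show HasFDerivAt (fun y => (1+‖y‖^2)^(-a) * fderiv ℝ p y (ee n i)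
      + (-2*a) * ((1+‖y‖^2)^(-a-1) * (y i * p y))) _ x from hD).fderiv]
  simp only [ContinuousLinearMap.add_apply, ContinuousLinearMap.smul_apply, smul_eq_mul,
    ContinuousLinearMap.comp_apply, ContinuousLinearMap.apply_apply]
  rw [show (-a-1-1 : ℝ) = -a-2 from by ring]
  simp only [innerSL_apply_apply, ContinuousLinearMap.add_apply, ContinuousLinearMap.smul_apply,
    smul_eq_mul, PiLp.proj_apply]
  simp [ee, EuclideanSpace.inner_single_right, EuclideanSpace.single_apply]
  ring

end main


/-- For `a > 0`, `b ≥ 2`, and `p` a homogeneous harmonic polynomial of degree `b` on `ℝⁿ`,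
`Δ((1+|x|²)^{−a} p(x)) = −2a(2a+2)(1+|x|²)^{−a−2} p(x) − 2a(n−2a+2b−2)(1+|x|²)^{−a−1} p(x)`. -/
theorem lap_inv_pow_mul_harmonic (n b : ℕ) (hn : 1 ≤ n) (a : ℝ) (ha : 0 < a) (hb : 2 ≤ b)
    (p : EuclideanSpace ℝ (Fin n) → ℝ)
    (hsmooth : ContDiff ℝ (⊤ : ℕ∞) p)
    (hhom : ∀ (t : ℝ) (x : EuclideanSpace ℝ (Fin n)), p (t • x) = t ^ b * p x)
    (hharm : ∀ x, lap n p x = 0)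
    (x : EuclideanSpace ℝ (Fin n)) :
    lap n (fun y => (1 + ‖y‖ ^ 2) ^ (-a) * p y) x =
      -2 * a * (2 * a + 2) * (1 + ‖x‖ ^ 2) ^ (-a - 2) * p x
      - 2 * a * ((n : ℝ) - 2 * a + 2 * (b : ℝ) - 2) * (1 + ‖x‖ ^ 2) ^ (-a - 1) * p x := by
  have hq : (0:ℝ) < 1 + ‖x‖^2 := by positivity
  -- second derivatives of p in terms of pd
  have hBB : ∀ i : Fin n, fderiv ℝ (fderiv ℝ p) x (ee n i) (ee n i) = pd n i (pd n i p) x := by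
    intro i
    have h := (pdp_hasFDeriv hsmooth i x).fderiv
    show _ = fderiv ℝ (pd n i p) x (EuclideanSpace.single i 1)
    rw [show pd n i p = fun y => fderiv ℝ p y (ee n i) from rfl, h]
    simp [ee]
  -- Euler sum
  have hx : x = ∑ i, x i • ee n i := by
    ext j
    rw [WithLp.ofLp_sum, Finset.sum_apply j Finset.univ]
    simp [ee, EuclideanSpace.single_apply]
  have heuler : ∑ i, x i * fderiv ℝ p x (ee n i) = (b : ℝ) * p x := by
    have hL : ∀ (L : EuclideanSpace ℝ (Fin n) →L[ℝ] ℝ), L x = ∑ i, x i * L (ee n i) := by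
      intro L
      conv_lhs => rw [hx]
      rw [map_sum]
      simp
    rw [← euler hsmooth hhom x, hL (fderiv ℝ p x)]
  have hns : ∑ i, (x i)^2 = ‖x‖^2 := by
    rw [EuclideanSpace.norm_eq, Real.sq_sqrt (by positivity)]
    simp [sq_abs]
  have h1 : (1 + ‖x‖^2) ^ (-a-1) = (1 + ‖x‖^2) ^ (-a-2) * (1 + ‖x‖^2) := by
    rw [show (-a-1:ℝ) = (-a-2)+1 by ring, Real.rpow_add hq, Real.rpow_one]
  show ∑ i, pd n i (pd n i (fun y => (1 + ‖y‖ ^ 2) ^ (-a) * p y)) x = _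
  simp_rw [key hsmooth, hBB]
  rw [Finset.sum_add_distrib, Finset.sum_sub_distrib, Finset.sum_sub_distrib,
    ← Finset.mul_sum, ← Finset.mul_sum, Finset.sum_const, Finset.card_univ,
    Fintype.card_fin, nsmul_eq_mul]
  rw [show (∑ i, pd n i (pd n i p) x) = lap n p x from rfl, hharm x, heuler]
  simp_rw [← Finset.mul_sum]
  rw [← Finset.sum_mul, hns]
  simp only [h1]
  ring
end

section
/- For a > 0, b ≥ 2, and p a homogeneous harmonic polynomial of degree b on ℝⁿ, Δ²((1+r²)^{−a} p) = 2a(2a+2)(2a+4)(2a+6)(1+r²)^{−a−4} p + 4a(2a+2)(2a+4)(n−2a+2b−4)(1+r²)^{−a−3} p + 2a(2a+2)(n−2a+2b−2)(n−2a+2b−4)(1+r²)^{−a−2} p, where r = |x|. -/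
open Real

namespace BilapAux

variable {n : ℕ}

lemma one_le_inf : ((⊤ : ℕ∞) : WithTop ℕ∞) ≠ 0 := by
  simp

lemma inf_add_one : ((⊤ : ℕ∞) : WithTop ℕ∞) + 1 ≤ ((⊤ : ℕ∞) : WithTop ℕ∞) := by
  exact_mod_cast le_top

lemma pd_contDiff (i : Fin n) {f : EuclideanSpace ℝ (Fin n) → ℝ}
    (hf : ContDiff ℝ (⊤ : ℕ∞) f) : ContDiff ℝ (⊤ : ℕ∞) (pd n i f) :=
  (hf.fderiv_right inf_add_one).clm_apply contDiff_const

lemma g_pos (x : EuclideanSpace ℝ (Fin n)) : (0:ℝ) < 1 + ‖x‖^2 := by positivity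

lemma hasFDerivAt_g (x : EuclideanSpace ℝ (Fin n)) :
    HasFDerivAt (fun y : EuclideanSpace ℝ (Fin n) => 1 + ‖y‖^2) (2 • innerSL ℝ x) x := by
  simpa using ((hasStrictFDerivAt_norm_sq x).hasFDerivAt).const_add 1

lemma keyD (c : ℝ) {f : EuclideanSpace ℝ (Fin n) → ℝ}
    {f' : EuclideanSpace ℝ (Fin n) →L[ℝ] ℝ} (x : EuclideanSpace ℝ (Fin n))
    (hf : HasFDerivAt f f' x) :
    HasFDerivAt (fun y => (1 + ‖y‖^2) ^ c * f y)
      (((1 + ‖x‖^2) ^ c) • f' + (f x) • ((c * (1 + ‖x‖^2) ^ (c-1)) • (2 • innerSL ℝ x))) x :=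
  ((hasFDerivAt_g x).rpow_const (Or.inl (g_pos x).ne')).mul hf

lemma contDiff_gc (c : ℝ) :
    ContDiff ℝ (⊤ : ℕ∞) (fun y : EuclideanSpace ℝ (Fin n) => (1 + ‖y‖^2) ^ c) := by
  rw [contDiff_iff_contDiffAt]
  intro x
  exact ((contDiff_const.add (contDiff_norm_sq ℝ)).contDiffAt).rpow_const_of_ne (g_pos x).ne'

lemma contDiff_rpow_mul (c : ℝ) {f : EuclideanSpace ℝ (Fin n) → ℝ}
    (hf : ContDiff ℝ (⊤ : ℕ∞) f) :
    ContDiff ℝ (⊤ : ℕ∞) (fun y => (1 + ‖y‖^2) ^ c * f y) :=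
  (contDiff_gc c).mul hf

lemma pd_rpow_mul (c : ℝ) {f : EuclideanSpace ℝ (Fin n) → ℝ}
    (hf : ContDiff ℝ (⊤ : ℕ∞) f) (i : Fin n) (x : EuclideanSpace ℝ (Fin n)) :
    pd n i (fun y => (1 + ‖y‖^2) ^ c * f y) x
      = (1 + ‖x‖^2) ^ c * pd n i f x + (2*c) * (((1 + ‖x‖^2) ^ (c-1) * f x) * x i) := by
  have H := keyD c x ((hf.differentiable one_le_inf) x).hasFDerivAt
  simp only [pd, H.fderiv]
  simp [EuclideanSpace.inner_single_right]
  ring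

lemma hasFDerivAt_coord (i : Fin n) (x : EuclideanSpace ℝ (Fin n)) :
    HasFDerivAt (fun y : EuclideanSpace ℝ (Fin n) => y i)
      (innerSL ℝ (EuclideanSpace.single i (1:ℝ))) x := by
  have h : (fun y : EuclideanSpace ℝ (Fin n) => y i)
      = fun y => (innerSL ℝ (EuclideanSpace.single i (1:ℝ))) y := by
    funext y
    simp [EuclideanSpace.inner_single_left]
  rw [h]
  exact (innerSL ℝ (EuclideanSpace.single i (1:ℝ))).hasFDerivAt

lemma pd_pd_rpow_mul (c : ℝ) {f : EuclideanSpace ℝ (Fin n) → ℝ}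
    (hf : ContDiff ℝ (⊤ : ℕ∞) f) (i : Fin n) (x : EuclideanSpace ℝ (Fin n)) :
    pd n i (pd n i (fun y => (1 + ‖y‖^2) ^ c * f y)) x
      = (1 + ‖x‖^2) ^ c * pd n i (pd n i f) x
        + (4*c) * ((1 + ‖x‖^2) ^ (c-1)) * (pd n i f x * x i)
        + (2*c) * ((1 + ‖x‖^2) ^ (c-1) * f x)
        + (4*c*(c-1)) * ((1 + ‖x‖^2) ^ (c-2) * f x) * (x i)^2 := by
  have hq : ContDiff ℝ (⊤ : ℕ∞) (pd n i f) := pd_contDiff i hf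
  have hFeq : pd n i (fun y => (1 + ‖y‖^2) ^ c * f y)
      = fun y => (1 + ‖y‖^2) ^ c * pd n i f y + (2*c) * (((1 + ‖y‖^2) ^ (c-1) * f y) * y i) :=
    funext fun y => pd_rpow_mul c hf i y
  rw [hFeq]
  have H1 := keyD c x ((hq.differentiable one_le_inf) x).hasFDerivAt
  have H2 := (((keyD (c-1) x ((hf.differentiable one_le_inf) x).hasFDerivAt).mul
      (hasFDerivAt_coord i x)).const_mul (2*c))
  have H := H1.add H2
  have HF := H.fderiv
  simp only [pd] at HF ⊢
  erw [HF]
  simp [EuclideanSpace.inner_single_right, EuclideanSpace.inner_single_left]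
  ring

lemma pd_add_mul (i : Fin n) (A B : ℝ) {f g : EuclideanSpace ℝ (Fin n) → ℝ}
    {x : EuclideanSpace ℝ (Fin n)}
    (hf : DifferentiableAt ℝ f x) (hg : DifferentiableAt ℝ g x) :
    pd n i (fun y => A * f y + B * g y) x = A * pd n i f x + B * pd n i g x := by
  simp only [pd]
  rw [fderiv_fun_add (hf.const_mul A) (hg.const_mul B), fderiv_const_mul hf, fderiv_const_mul hg]
  simp

lemma lap_add_mul (A B : ℝ) {f g : EuclideanSpace ℝ (Fin n) → ℝ}
    (hf : ContDiff ℝ (⊤ : ℕ∞) f) (hg : ContDiff ℝ (⊤ : ℕ∞) g)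
    (x : EuclideanSpace ℝ (Fin n)) :
    lap n (fun y => A * f y + B * g y) x = A * lap n f x + B * lap n g x := by
  unfold lap
  have h1 : ∀ i : Fin n, pd n i (fun y => A * f y + B * g y)
      = fun y => A * pd n i f y + B * pd n i g y :=
    fun i => funext fun y =>
      pd_add_mul i A B ((hf.differentiable one_le_inf) y) ((hg.differentiable one_le_inf) y)
  rw [Finset.mul_sum, Finset.mul_sum, ← Finset.sum_add_distrib]
  refine Finset.sum_congr rfl fun i _ => ?_
  rw [h1 i]
  exact pd_add_mul i A B ((pd_contDiff i hf).differentiable one_le_inf x)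
    ((pd_contDiff i hg).differentiable one_le_inf x)

end BilapAux

/-- For `a > 0`, `b ≥ 2`, and `p` a homogeneous harmonic polynomial of degree `b` on `ℝⁿ`,
with `r = |x|`:
`Δ²((1+r²)^{−a} p) = 2a(2a+2)(2a+4)(2a+6)(1+r²)^{−a−4} p
  + 4a(2a+2)(2a+4)(n−2a+2b−4)(1+r²)^{−a−3} p
  + 2a(2a+2)(n−2a+2b−2)(n−2a+2b−4)(1+r²)^{−a−2} p`. -/


theorem bilap_inv_pow_mul_harmonic (n b : ℕ) (hn : 1 ≤ n) (a : ℝ) (ha : 0 < a) (hb : 2 ≤ b)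
    (p : EuclideanSpace ℝ (Fin n) → ℝ)
    (hsmooth : ContDiff ℝ (⊤ : ℕ∞) p)
    (hhom : ∀ (t : ℝ) (x : EuclideanSpace ℝ (Fin n)), p (t • x) = t ^ b * p x)
    (hharm : ∀ x, lap n p x = 0)
    (x : EuclideanSpace ℝ (Fin n)) :
    lap n (lap n (fun y => (1 + ‖y‖ ^ 2) ^ (-a) * p y)) x =
      2 * a * (2 * a + 2) * (2 * a + 4) * (2 * a + 6) * (1 + ‖x‖ ^ 2) ^ (-a - 4) * p x
      + 4 * a * (2 * a + 2) * (2 * a + 4) * ((n : ℝ) - 2 * a + 2 * (b : ℝ) - 4)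
          * (1 + ‖x‖ ^ 2) ^ (-a - 3) * p x
      + 2 * a * (2 * a + 2) * ((n : ℝ) - 2 * a + 2 * (b : ℝ) - 2)
          * ((n : ℝ) - 2 * a + 2 * (b : ℝ) - 4) * (1 + ‖x‖ ^ 2) ^ (-a - 2) * p x := by
  classical
  open BilapAux in
  -- Euler identity
  have euler : ∀ y : EuclideanSpace ℝ (Fin n), ∑ i, pd n i p y * y i = (b:ℝ) * p y := by
    intro y
    have hp : HasFDerivAt p (fderiv ℝ p y) ((1:ℝ) • y) := by
      rw [one_smul]
      exact ((hsmooth.differentiable one_le_inf) y).hasFDerivAt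
    have hs : HasDerivAt (fun t : ℝ => t • y) y 1 := by
      simpa using (hasDerivAt_id (1:ℝ)).smul_const y
    have hderiv : HasDerivAt (fun t : ℝ => p (t • y)) (fderiv ℝ p y y) 1 := by
      exact hp.comp_hasDerivAt 1 hs
    have h2 : HasDerivAt (fun t : ℝ => t ^ b * p y) ((b:ℝ) * p y) 1 := by
      simpa using (hasDerivAt_pow b (1:ℝ)).mul_const (p y)
    have heq : (fun t : ℝ => p (t • y)) = fun t : ℝ => t ^ b * p y :=
      funext fun t => hhom t y
    rw [heq] at hderiv
    have hkey : fderiv ℝ p y y = (b:ℝ) * p y := hderiv.unique h2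
    have hx : (∑ i, y i • EuclideanSpace.single i (1:ℝ)) = y := by
      have h := (EuclideanSpace.basisFun (Fin n) ℝ).sum_repr y
      simpa [EuclideanSpace.basisFun_apply, EuclideanSpace.basisFun_repr] using h
    calc ∑ i, pd n i p y * y i
        = fderiv ℝ p y (∑ i, y i • EuclideanSpace.single i (1:ℝ)) := by
          rw [map_sum]
          simp [pd, mul_comm]
      _ = (b:ℝ) * p y := by rw [hx, hkey]
  -- key Laplacian computation
  have hk : ∀ (c : ℝ) (y : EuclideanSpace ℝ (Fin n)),
      lap n (fun z => (1 + ‖z‖^2) ^ c * p z) y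
        = (2*c*((n:ℝ) + 2*(b:ℝ) + 2*c - 2)) * ((1 + ‖y‖^2) ^ (c-1) * p y)
          + (-(4*c*(c-1))) * ((1 + ‖y‖^2) ^ (c-2) * p y) := by
    intro c y
    have hnorm : ‖y‖^2 = ∑ i, (y i)^2 := by
      rw [EuclideanSpace.norm_eq, Real.sq_sqrt (by positivity)]
      simp [sq_abs]
    have hmul : (1 + ‖y‖^2) ^ (c-2) * (1 + ‖y‖^2) = (1 + ‖y‖^2) ^ (c-1) := by
      rw [← Real.rpow_add_one (g_pos y).ne' (c-2)]
      congr 1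
      ring
    unfold lap
    rw [Finset.sum_congr rfl (fun i _ => pd_pd_rpow_mul c hsmooth i y)]
    simp only [Finset.sum_add_distrib, ← Finset.mul_sum, Finset.sum_const, Finset.card_univ,
      Fintype.card_fin, nsmul_eq_mul]
    rw [show (∑ i, pd n i (pd n i p) y) = 0 from hharm y, euler y, ← hnorm]
    linear_combination (4*c*(c-1)) * p y * hmul
  have hstep1 : lap n (fun y => (1 + ‖y‖^2) ^ (-a) * p y)
      = fun y => (2*(-a)*((n:ℝ) + 2*(b:ℝ) + 2*(-a) - 2)) * ((1 + ‖y‖^2) ^ (-a-1) * p y)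
          + (-(4*(-a)*((-a)-1))) * ((1 + ‖y‖^2) ^ (-a-2) * p y) :=
    funext fun y => hk (-a) y
  rw [hstep1]
  rw [BilapAux.lap_add_mul _ _ (contDiff_rpow_mul (-a-1) hsmooth)
    (contDiff_rpow_mul (-a-2) hsmooth) x]
  rw [hk (-a-1) x, hk (-a-2) x]
  rw [show (-a-1-1 : ℝ) = -a-2 by ring, show (-a-1-2 : ℝ) = -a-3 by ring,
    show (-a-2-1 : ℝ) = -a-3 by ring, show (-a-2-2 : ℝ) = -a-4 by ring]
  ring
end

section
/- For n > 4, the function w(x) = (1+|x|²)^{−(n−4)/2} on ℝⁿ satisfies Δ²w = (n−4)(n−2)n(n+2)·w^{(n+4)/(n−4)}. -/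
open Real

section aux
variable {n : ℕ}

noncomputable def gp (n : ℕ) (a : ℝ) : EuclideanSpace ℝ (Fin n) → ℝ :=
  fun x => (1 + ‖x‖ ^ 2) ^ a

lemma Npos (x : EuclideanSpace ℝ (Fin n)) : (0:ℝ) < 1 + ‖x‖ ^ 2 := by positivity

lemma hN (x : EuclideanSpace ℝ (Fin n)) :
    HasFDerivAt (fun y : EuclideanSpace ℝ (Fin n) => 1 + ‖y‖ ^ 2)
      (2 • (innerSL ℝ x)) x := by
  simpa using (hasStrictFDerivAt_norm_sq x).hasFDerivAt.const_add 1

lemma hg (a : ℝ) (x : EuclideanSpace ℝ (Fin n)) :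
    HasFDerivAt (gp n a)
      ((a * (1 + ‖x‖ ^ 2) ^ (a - 1)) • (2 • (innerSL ℝ x))) x :=
  (hN x).rpow_const (Or.inl (Npos x).ne')

lemma pd_gp (a : ℝ) (i : Fin n) (x : EuclideanSpace ℝ (Fin n)) :
    pd n i (gp n a) x = 2 * a * (1 + ‖x‖ ^ 2) ^ (a - 1) * x i := by
  rw [pd, (hg a x).fderiv]
  simp [EuclideanSpace.inner_single_right]
  ring

noncomputable def gpd (n : ℕ) (a : ℝ) (i : Fin n) : EuclideanSpace ℝ (Fin n) → ℝ :=
  fun x => 2 * a * (1 + ‖x‖ ^ 2) ^ (a - 1) * x i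

lemma hgd (a : ℝ) (i : Fin n) (x : EuclideanSpace ℝ (Fin n)) :
    HasFDerivAt (gpd n a i)
      ((2 * a) • ((x i) • ((a - 1) * (1 + ‖x‖ ^ 2) ^ (a - 1 - 1)) • (2 • (innerSL ℝ x))
        + ((1 + ‖x‖ ^ 2) ^ (a - 1)) • (EuclideanSpace.proj i : EuclideanSpace ℝ (Fin n) →L[ℝ] ℝ))) x := by
  have h1 := (hg (a - 1) x).mul ((EuclideanSpace.proj i :
      EuclideanSpace ℝ (Fin n) →L[ℝ] ℝ).hasFDerivAt (x := x))
  have := h1.const_mul (2 * a)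
  convert this using 1
  · rfl
  · rfl
  · rfl
  · rfl
  · rfl
  · ext y; simp [gpd, gp]; ring
  · ext v; simp [gp]; ring

lemma pd_pd_gp (a : ℝ) (i : Fin n) (x : EuclideanSpace ℝ (Fin n)) :
    pd n i (pd n i (gp n a)) x =
      4 * a * (a - 1) * (1 + ‖x‖ ^ 2) ^ (a - 2) * (x i) ^ 2
        + 2 * a * (1 + ‖x‖ ^ 2) ^ (a - 1) := by
  have he : pd n i (gp n a) = gpd n a i := funext fun y => pd_gp a i y
  rw [pd, he, (hgd a i x).fderiv]
  have : a - 1 - 1 = a - 2 := by ring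
  simp [this, EuclideanSpace.inner_single_right]
  ring

lemma sum_sq (x : EuclideanSpace ℝ (Fin n)) : ∑ i, (x i) ^ 2 = ‖x‖ ^ 2 := by
  rw [EuclideanSpace.norm_eq, Real.sq_sqrt (by positivity)]
  simp [sq_abs]

lemma lap_gp (a : ℝ) (x : EuclideanSpace ℝ (Fin n)) :
    lap n (gp n a) x =
      (2 * a * n + 4 * a * (a - 1)) * (1 + ‖x‖ ^ 2) ^ (a - 1)
        - 4 * a * (a - 1) * (1 + ‖x‖ ^ 2) ^ (a - 2) := by
  have h2 : (1 + ‖x‖ ^ 2) ^ (a - 2) * (1 + ‖x‖ ^ 2) = (1 + ‖x‖ ^ 2) ^ (a - 1) := by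
    rw [← Real.rpow_add_one (Npos x).ne']; congr 1; ring
  unfold lap
  simp only [pd_pd_gp, Finset.sum_add_distrib, ← Finset.mul_sum, sum_sq,
    Finset.sum_const, Finset.card_univ, Fintype.card_fin, nsmul_eq_mul]
  linear_combination (4 * a * (a - 1)) * h2


lemma pd_lin (c₁ c₂ : ℝ) (f g : EuclideanSpace ℝ (Fin n) → ℝ) (i : Fin n)
    (x : EuclideanSpace ℝ (Fin n))
    (hf : DifferentiableAt ℝ f x) (hg : DifferentiableAt ℝ g x) :
    pd n i (fun y => c₁ * f y + c₂ * g y) x = c₁ * pd n i f x + c₂ * pd n i g x := by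
  unfold pd
  rw [fderiv_fun_add ((hf.const_mul c₁)) ((hg.const_mul c₂)), fderiv_const_mul hf c₁,
    fderiv_const_mul hg c₂]
  simp

lemma lap_comb (c₁ c₂ b c : ℝ) (x : EuclideanSpace ℝ (Fin n)) :
    lap n (fun y => c₁ * gp n b y + c₂ * gp n c y) x =
      c₁ * lap n (gp n b) x + c₂ * lap n (gp n c) x := by
  unfold lap
  have step1 : ∀ i : Fin n, pd n i (fun y => c₁ * gp n b y + c₂ * gp n c y)
      = fun y => c₁ * gpd n b i y + c₂ * gpd n c i y := by
    intro i
    funext y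
    rw [pd_lin c₁ c₂ _ _ i y (hg b y).differentiableAt (hg c y).differentiableAt,
      pd_gp, pd_gp]
    rfl
  have step2 : ∀ i : Fin n, pd n i (pd n i (fun y => c₁ * gp n b y + c₂ * gp n c y)) x
      = c₁ * pd n i (pd n i (gp n b)) x + c₂ * pd n i (pd n i (gp n c)) x := by
    intro i
    rw [step1 i, pd_lin c₁ c₂ _ _ i x (hgd b i x).differentiableAt
      (hgd c i x).differentiableAt]
    have hb : pd n i (gp n b) = gpd n b i := funext fun y => pd_gp b i y
    have hc : pd n i (gp n c) = gpd n c i := funext fun y => pd_gp c i y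
    rw [hb, hc]
  simp only [step2]
  rw [Finset.sum_add_distrib, ← Finset.mul_sum, ← Finset.mul_sum]

end aux


/-- For `n > 4`, the standard bubble `w(x) = (1+|x|²)^{−(n−4)/2}` on `ℝⁿ` satisfies
`Δ²w = (n−4)(n−2)n(n+2)·w^{(n+4)/(n−4)}`. -/
theorem bilap_bubble (n : ℕ) (hn : 4 < n)
    (w : EuclideanSpace ℝ (Fin n) → ℝ)
    (hw : ∀ x, w x = (1 + ‖x‖ ^ 2) ^ (-(((n : ℝ) - 4) / 2)))
    (x : EuclideanSpace ℝ (Fin n)) :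
    lap n (lap n w) x =
      ((n : ℝ) - 4) * ((n : ℝ) - 2) * (n : ℝ) * ((n : ℝ) + 2)
        * w x ^ (((n : ℝ) + 4) / ((n : ℝ) - 4)) := by
  obtain ⟨a, ha⟩ : ∃ a : ℝ, a = -(((n : ℝ) - 4) / 2) := ⟨_, rfl⟩
  have hn4 : (4 : ℝ) < (n : ℝ) := by exact_mod_cast hn
  have hne : (n : ℝ) - 4 ≠ 0 := by linarith
  have hwg : w = gp n a := funext fun y => by rw [hw y, ha]; rfl
  have hl : lap n w = fun y =>
      (2 * a * n + 4 * a * (a - 1)) * gp n (a - 1) y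
        + (-(4 * a * (a - 1))) * gp n (a - 2) y := by
    funext y
    rw [hwg, lap_gp]
    unfold gp
    ring
  rw [hl, lap_comb, lap_gp, lap_gp]
  have hrhs : w x ^ (((n : ℝ) + 4) / ((n : ℝ) - 4)) = (1 + ‖x‖ ^ 2) ^ (a - 4) := by
    rw [hw x, ← Real.rpow_mul (Npos x).le]
    congr 1
    rw [ha]
    field_simp
    ring
  rw [hrhs,
    show a - 1 - 1 = a - 2 from by ring, show a - 1 - 2 = a - 3 from by ring,
    show a - 2 - 1 = a - 3 from by ring, show a - 2 - 2 = a - 4 from by ring]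
  generalize (1 + ‖x‖ ^ 2 : ℝ) ^ (a - 2) = t1
  generalize (1 + ‖x‖ ^ 2 : ℝ) ^ (a - 3) = t2
  generalize (1 + ‖x‖ ^ 2 : ℝ) ^ (a - 4) = t3
  subst ha
  field_simp
  ring
end

section
/- With Ŵ as above, the divergence satisfies Ŵᵢⱼ,ᵢ = −(n+s)s|x|^{2q−2}Vⱼ, and the Laplacian satisfies ΔŴᵢⱼ = (2q(2q+2s+n−2)−2s)|x|^{2q−2}(∂ᵢVⱼ+∂ⱼVᵢ − (2/n)(div V)δᵢⱼ) − s(2q−2)(2q+2s+n)|x|^{2q−4}(Vᵢxⱼ+Vⱼxᵢ); here div V = 0 so the δᵢⱼ term vanishes. -/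
namespace WAux

noncomputable def ee (n : ℕ) (i : Fin n) : EuclideanSpace ℝ (Fin n) := EuclideanSpace.single i 1

def Pf (n : ℕ) (y : EuclideanSpace ℝ (Fin n)) : ℝ := ∑ l, y l ^ 2

variable {n : ℕ}

lemma diffAt {f : EuclideanSpace ℝ (Fin n) → ℝ} (hf : ContDiff ℝ (⊤:ℕ∞) f)
    (x : EuclideanSpace ℝ (Fin n)) : DifferentiableAt ℝ f x :=
  ((hf.differentiable (by simp)) x)

lemma clm_expand (L : EuclideanSpace ℝ (Fin n) →L[ℝ] ℝ) (v : EuclideanSpace ℝ (Fin n)) :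
    L v = ∑ l, v l * L (ee n l) := by
  have hv : v = ∑ l, v l • ee n l := by
    ext j
    rw [WithLp.ofLp_sum, Finset.sum_apply]
    simp [ee, EuclideanSpace.single_apply]
  conv_lhs => rw [hv]
  simp [map_sum]

lemma contDiff_pd (i : Fin n) {f : EuclideanSpace ℝ (Fin n) → ℝ} (hf : ContDiff ℝ (⊤:ℕ∞) f) :
    ContDiff ℝ (⊤:ℕ∞) (pd n i f) := by
  have h1 : ContDiff ℝ ((⊤:ℕ∞):WithTop ℕ∞) (fderiv ℝ f) :=
    hf.fderiv_right (by exact_mod_cast le_refl _)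
  exact h1.clm_apply contDiff_const

lemma contDiff_coord (j : Fin n) : ContDiff ℝ (⊤:ℕ∞) (fun y : EuclideanSpace ℝ (Fin n) => y j) :=
  (EuclideanSpace.proj (𝕜 := ℝ) j).contDiff

lemma contDiff_P : ContDiff ℝ (⊤:ℕ∞) (Pf n) :=
  ContDiff.sum fun l _ => (contDiff_coord l).pow 2

lemma pd_add {i : Fin n} {f g : EuclideanSpace ℝ (Fin n) → ℝ} {x}
    (hf : DifferentiableAt ℝ f x) (hg : DifferentiableAt ℝ g x) :
    pd n i (fun y => f y + g y) x = pd n i f x + pd n i g x := by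
  simp [pd, fderiv_fun_add hf hg]

lemma pd_mul {i : Fin n} {f g : EuclideanSpace ℝ (Fin n) → ℝ} {x}
    (hf : DifferentiableAt ℝ f x) (hg : DifferentiableAt ℝ g x) :
    pd n i (fun y => f y * g y) x = pd n i f x * g x + f x * pd n i g x := by
  simp [pd, fderiv_fun_mul hf hg]; ring

lemma pd_const {i : Fin n} {x} (c : ℝ) : pd n i (fun _ => c) x = 0 := by
  simp [pd]

lemma pd_cmul {i : Fin n} {f : EuclideanSpace ℝ (Fin n) → ℝ} {x} (c : ℝ)
    (hf : DifferentiableAt ℝ f x) :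
    pd n i (fun y => c * f y) x = c * pd n i f x := by
  simp [pd, fderiv_const_mul hf]

lemma pd_sub {i : Fin n} {f g : EuclideanSpace ℝ (Fin n) → ℝ} {x}
    (hf : DifferentiableAt ℝ f x) (hg : DifferentiableAt ℝ g x) :
    pd n i (fun y => f y - g y) x = pd n i f x - pd n i g x := by
  simp [pd, fderiv_fun_sub hf hg]

lemma pd_sum {i : Fin n} {ι : Type*} (t : Finset ι) {f : ι → EuclideanSpace ℝ (Fin n) → ℝ} {x}
    (hf : ∀ l ∈ t, DifferentiableAt ℝ (f l) x) :
    pd n i (fun y => ∑ l ∈ t, f l y) x = ∑ l ∈ t, pd n i (f l) x := by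
  simp [pd, fderiv_fun_sum hf]

lemma pd_coord (i j : Fin n) (x : EuclideanSpace ℝ (Fin n)) :
    pd n i (fun y => y j) x = if i = j then 1 else 0 := by
  have : (fun y : EuclideanSpace ℝ (Fin n) => y j) = (EuclideanSpace.proj j : _ →L[ℝ] ℝ) := rfl
  rw [pd, this, ContinuousLinearMap.fderiv]
  simp [EuclideanSpace.single_apply, eq_comm]

lemma pd_pow {i : Fin n} {f : EuclideanSpace ℝ (Fin n) → ℝ} {x}
    (hf : DifferentiableAt ℝ f x) (m : ℕ) :
    pd n i (fun y => f y ^ m) x = m * f x ^ (m - 1) * pd n i f x := by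
  induction m with
  | zero => simpa using pd_const (i := i) (x := x) 1
  | succ m ih =>
      have hfm : DifferentiableAt ℝ (fun y => f y ^ m) x := hf.pow m
      have e1 : (fun y => f y ^ (m+1)) = fun y => f y * f y ^ m := by
        funext y; ring
      have pdmul : pd n i (fun y => f y * f y ^ m) x
          = pd n i f x * f x ^ m + f x * pd n i (fun y => f y ^ m) x := by
        simp [pd, fderiv_fun_mul hf hfm]; ring
      rw [e1, pdmul, ih]
      rcases Nat.eq_zero_or_pos m with h | h
      · subst h; simp
      · have h2 : f x ^ m = f x * f x ^ (m - 1) := by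
          conv_lhs => rw [← Nat.succ_pred_eq_of_pos h]
          rw [pow_succ']
          rfl
        rw [show m + 1 - 1 = m from rfl, h2]
        push_cast; ring

lemma pd_eq_snd {f : EuclideanSpace ℝ (Fin n) → ℝ} (hf : ContDiff ℝ (⊤:ℕ∞) f)
    (i j : Fin n) (x : EuclideanSpace ℝ (Fin n)) :
    pd n i (pd n j f) x = fderiv ℝ (fderiv ℝ f) x (ee n i) (ee n j) := by
  have h1 : ContDiff ℝ ((⊤:ℕ∞):WithTop ℕ∞) (fderiv ℝ f) :=
    hf.fderiv_right (by exact_mod_cast le_refl _)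
  have hc : DifferentiableAt ℝ (fderiv ℝ f) x :=
    (h1.differentiable (by simp)) x
  rw [show pd n i (pd n j f) x = fderiv ℝ (fun y => (fderiv ℝ f y) (ee n j)) x (ee n i) from rfl]
  rw [fderiv_clm_apply hc (differentiableAt_const _)]
  simp

lemma pd_comm {f : EuclideanSpace ℝ (Fin n) → ℝ} (hf : ContDiff ℝ (⊤:ℕ∞) f)
    (i j : Fin n) (x : EuclideanSpace ℝ (Fin n)) :
    pd n i (pd n j f) x = pd n j (pd n i f) x := by
  rw [pd_eq_snd hf, pd_eq_snd hf]
  exact (hf.contDiffAt.isSymmSndFDerivAt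
    (by rw [minSmoothness_of_isRCLikeNormedField, show (2 : WithTop ℕ∞) = ((2:ℕ∞) : WithTop ℕ∞) from rfl]
        exact WithTop.coe_le_coe.2 le_top)) _ _

lemma euler {d : ℕ} {f : EuclideanSpace ℝ (Fin n) → ℝ} (hf : ContDiff ℝ (⊤:ℕ∞) f)
    (hhom : ∀ t : ℝ, 0 < t → ∀ x, f (t • x) = t ^ d * f x) (x : EuclideanSpace ℝ (Fin n)) :
    ∑ l, x l * pd n l f x = d * f x := by
  have hdiff : ∀ y, DifferentiableAt ℝ f y := fun y => diffAt hf y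
  have h1 : HasDerivAt (fun t : ℝ => f (t • x)) (fderiv ℝ f x x) 1 := by
    have hs : HasDerivAt (fun t : ℝ => t • x) x 1 := by
      simpa using (hasDerivAt_id (1:ℝ)).smul_const x
    have := ((hdiff ((1:ℝ) • x)).hasFDerivAt).comp_hasDerivAt 1 hs
    rw [one_smul] at this; exact this
  have h2 : HasDerivAt (fun t : ℝ => f (t • x)) ((d : ℝ) * f x) 1 := by
    have h3 : HasDerivAt (fun t : ℝ => t ^ d * f x) ((d : ℝ) * 1 ^ (d - 1) * f x) 1 := by
      simpa using (hasDerivAt_pow d (1:ℝ)).mul_const (f x)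
    have heq : (fun t : ℝ => f (t • x)) =ᶠ[nhds 1] (fun t : ℝ => t ^ d * f x) := by
      filter_upwards [eventually_gt_nhds (by norm_num : (0:ℝ) < 1)] with t ht
      exact hhom t ht x
    simpa using h3.congr_of_eventuallyEq heq
  have hx : fderiv ℝ f x x = (d : ℝ) * f x := h1.unique h2
  calc ∑ l, x l * pd n l f x = fderiv ℝ f x x := by
        rw [clm_expand (fderiv ℝ f x) x]; rfl
    _ = _ := hx

lemma pd_P {l : Fin n} {x} : pd n l (Pf n) x = 2 * x l := by
  have : pd n l (fun y => ∑ k, y k ^ 2) x = ∑ k, pd n l (fun y => y k ^ 2) x :=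
    pd_sum Finset.univ (fun k _ => ((contDiff_coord k).pow 2 |> diffAt) x)
  rw [show Pf n = fun y => ∑ k, y k ^ 2 from rfl, this]
  have hterm : ∀ k, pd n l (fun y => y k ^ 2) x = 2 * x k * (if l = k then 1 else 0) := by
    intro k
    rw [pd_pow (diffAt (contDiff_coord k) x) 2, pd_coord]
    norm_num
  rw [Finset.sum_congr rfl (fun k _ => hterm k)]
  simp

lemma pd_P_pow_mul (m : ℕ) {u : EuclideanSpace ℝ (Fin n) → ℝ} (hu : ContDiff ℝ (⊤:ℕ∞) u)
    (l : Fin n) (x : EuclideanSpace ℝ (Fin n)) :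
    pd n l (fun y => Pf n y ^ m * u y) x
      = 2 * m * Pf n x ^ (m-1) * (x l * u x) + Pf n x ^ m * pd n l u x := by
  rw [pd_mul ((diffAt contDiff_P x).fun_pow m) (diffAt hu x),
      pd_pow (diffAt contDiff_P x) m, pd_P]
  ring

lemma cast_helper (m : ℕ) (a : ℝ) :
    (m:ℝ) * ((m-1:ℕ):ℝ) * (a^(m-1-1) * a) = (m:ℝ) * ((m:ℝ)-1) * a^(m-1) := by
  match m with
  | 0 => simp
  | 1 => simp
  | (k+2) =>
      push_cast
      ring

lemma cast_helper2 (q : ℕ) (hq : 1 ≤ q) (a : ℝ) :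
    ((q:ℝ)-1) * (a^(q-1-1) * a) = ((q:ℝ)-1) * a^(q-1) := by
  match q, hq with
  | 1, _ => simp
  | (k+2), _ =>
      push_cast
      ring

lemma lap_P_pow_mul (m : ℕ) {u : EuclideanSpace ℝ (Fin n) → ℝ} (hu : ContDiff ℝ (⊤:ℕ∞) u)
    (x : EuclideanSpace ℝ (Fin n)) :
    lap n (fun y => Pf n y ^ m * u y) x
      = 2*(m:ℝ)*(2*(m:ℝ)+(n:ℝ)-2) * Pf n x^(m-1) * u x
        + 4*(m:ℝ)*Pf n x^(m-1) * (∑ l, x l * pd n l u x)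
        + Pf n x^m * lap n u x := by
  have hfirst : ∀ l : Fin n, pd n l (fun y => Pf n y ^ m * u y)
      = fun y => (2*(m:ℝ)) * (Pf n y ^ (m-1) * (y l * u y)) + Pf n y ^ m * pd n l u y := by
    intro l; funext y
    rw [pd_P_pow_mul m hu l y]; ring
  have key : ∀ l : Fin n, pd n l (pd n l (fun y => Pf n y ^ m * u y)) x
      = (4*(m:ℝ)*((m-1:ℕ):ℝ)*(Pf n x^(m-1-1)*u x)) * (x l ^ 2)
        + 2*(m:ℝ)*(Pf n x^(m-1)*u x)
        + (4*(m:ℝ)*Pf n x^(m-1)) * (x l * pd n l u x)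
        + Pf n x^m * pd n l (pd n l u) x := by
    intro l
    have hG : ContDiff ℝ (⊤:ℕ∞) (fun y : EuclideanSpace ℝ (Fin n) => y l * u y) :=
      (contDiff_coord l).mul hu
    have dG : DifferentiableAt ℝ (fun y => Pf n y ^ (m-1) * (y l * u y)) x :=
      diffAt ((contDiff_P.pow (m-1)).mul hG) x
    have dH : DifferentiableAt ℝ (fun y => Pf n y ^ m * pd n l u y) x :=
      diffAt ((contDiff_P.pow m).mul (contDiff_pd l hu)) x
    rw [hfirst l, pd_add (dG.const_mul _) dH, pd_cmul _ dG,
        pd_P_pow_mul (m-1) hG l x, pd_P_pow_mul m (contDiff_pd l hu) l x,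
        pd_mul (diffAt (contDiff_coord l) x) (diffAt hu x), pd_coord]
    simp only [eq_self_iff_true, if_true]
    ring
  have hlap : lap n (fun y => Pf n y ^ m * u y) x
      = ∑ l, pd n l (pd n l (fun y => Pf n y ^ m * u y)) x := rfl
  rw [hlap, Finset.sum_congr rfl (fun l _ => key l)]
  simp only [Finset.sum_add_distrib, ← Finset.mul_sum, Finset.sum_const, Finset.card_univ,
    Fintype.card_fin, nsmul_eq_mul]
  have hPx : ∑ l, x l ^ 2 = Pf n x := rfl
  have hlapu : ∑ l, pd n l (pd n l u) x = lap n u x := rfl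
  rw [hPx, hlapu]
  linear_combination (4 * u x) * cast_helper m (Pf n x)

lemma lap_sub_cmul {F G : EuclideanSpace ℝ (Fin n) → ℝ}
    (hF : ContDiff ℝ (⊤:ℕ∞) F) (hG : ContDiff ℝ (⊤:ℕ∞) G) (c : ℝ) (x) :
    lap n (fun y => F y - c * G y) x = lap n F x - c * lap n G x := by
  have h1 : ∀ l : Fin n, pd n l (fun y => F y - c * G y)
      = fun y => pd n l F y - c * pd n l G y := by
    intro l; funext y
    rw [pd_sub (diffAt hF y) ((diffAt hG y).const_mul c), pd_cmul c (diffAt hG y)]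
  have key : ∀ l : Fin n, pd n l (pd n l (fun y => F y - c * G y)) x
      = pd n l (pd n l F) x - c * pd n l (pd n l G) x := by
    intro l
    rw [h1 l, pd_sub (diffAt (contDiff_pd l hF) x) ((diffAt (contDiff_pd l hG) x).const_mul c),
        pd_cmul c (diffAt (contDiff_pd l hG) x)]
  show ∑ l, pd n l (pd n l (fun y => F y - c * G y)) x = _
  rw [Finset.sum_congr rfl (fun l _ => key l), Finset.sum_sub_distrib, ← Finset.mul_sum]
  rfl

end WAux


open WAux

/-- With `Ŵᵢⱼ = |x|^{2q}(∂ᵢVⱼ + ∂ⱼVᵢ) − s|x|^{2q−2}(xⱼVᵢ + xᵢVⱼ)` (for `V` a vector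
field of homogeneous harmonic degree-`(s+1)` components with `div V = 0`, `xᵢVᵢ = 0`),
the divergence satisfies `Ŵᵢⱼ,ᵢ = −(n+s)s|x|^{2q−2}Vⱼ`, and the Laplacian satisfies
`ΔŴᵢⱼ = (2q(2q+2s+n−2)−2s)|x|^{2q−2}(∂ᵢVⱼ+∂ⱼVᵢ − (2/n)(div V)δᵢⱼ)
  − s(2q−2)(2q+2s+n)|x|^{2q−4}(Vᵢxⱼ+Vⱼxᵢ)`. -/
theorem divergence_and_lap_of_W (n s q : ℕ) (hn : 2 ≤ n) (hs : 1 ≤ s) (hq : 1 ≤ q)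
    (V : Fin n → EuclideanSpace ℝ (Fin n) → ℝ)
    (hsmooth : ∀ i, ContDiff ℝ (⊤ : ℕ∞) (V i))
    (hhom : ∀ i, ∀ (t : ℝ) (x : EuclideanSpace ℝ (Fin n)), V i (t • x) = t ^ (s + 1) * V i x)
    (hharm : ∀ i x, lap n (V i) x = 0)
    (hdiv : ∀ x, ∑ i, pd n i (V i) x = 0)
    (hrad : ∀ x, ∑ i, x i * V i x = 0)
    (W : EuclideanSpace ℝ (Fin n) → Fin n → Fin n → ℝ)
    (hW : ∀ x, ∀ i j, W x i j
      = ‖x‖ ^ (2 * q) * (pd n i (V j) x + pd n j (V i) x)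
        - (s : ℝ) * ‖x‖ ^ (2 * q - 2) * (x j * V i x + x i * V j x)) :
    (∀ x, ∀ j, ∑ i, pd n i (fun y => W y i j) x
      = -(((n : ℝ) + (s : ℝ)) * (s : ℝ)) * ‖x‖ ^ (2 * q - 2) * V j x) ∧
    (∀ x, ∀ i j, lap n (fun y => W y i j) x
      = (2 * (q : ℝ) * (2 * (q : ℝ) + 2 * (s : ℝ) + (n : ℝ) - 2) - 2 * (s : ℝ))
          * ‖x‖ ^ (2 * q - 2)
          * (pd n i (V j) x + pd n j (V i) x
              - (2 / (n : ℝ)) * (∑ l, pd n l (V l) x) * (if i = j then 1 else 0))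
        - (s : ℝ) * (2 * (q : ℝ) - 2) * (2 * (q : ℝ) + 2 * (s : ℝ) + (n : ℝ))
          * ‖x‖ ^ (2 * (q : ℤ) - 4) * (V i x * x j + V j x * x i)) := by
  classical
  have hn2 : ∀ y : EuclideanSpace ℝ (Fin n), ‖y‖^2 = Pf n y := by
    intro y
    rw [EuclideanSpace.norm_eq, Real.sq_sqrt (by positivity)]
    simp [Pf, Real.norm_eq_abs, sq_abs]
  have hnq : ∀ y : EuclideanSpace ℝ (Fin n), ‖y‖^(2*q) = Pf n y ^ q := fun y => by
    rw [pow_mul, hn2]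
  have hnq1 : ∀ y : EuclideanSpace ℝ (Fin n), ‖y‖^(2*q-2) = Pf n y ^ (q-1) := fun y => by
    rw [show 2*q-2 = 2*(q-1) by omega, pow_mul, hn2]
  have dV : ∀ i y, DifferentiableAt ℝ (V i) y := fun i y => diffAt (hsmooth i) y
  have hpdVsm : ∀ (i l : Fin n), ContDiff ℝ (⊤:ℕ∞) (pd n l (V i)) :=
    fun i l => contDiff_pd l (hsmooth i)
  have eulerV : ∀ (j : Fin n) x, ∑ l, x l * pd n l (V j) x = ((s:ℝ)+1) * V j x := by
    intro j x
    have h := euler (hsmooth j) (fun t _ y => hhom j t y) x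
    push_cast at h
    exact h
  have hpdhom : ∀ (j l : Fin n) (t:ℝ), 0 < t → ∀ x, pd n l (V j) (t • x) = t^s * pd n l (V j) x := by
    intro j l t ht x
    have h0 : HasFDerivAt (fun y => V j (t • y))
        ((fderiv ℝ (V j) (t • x)).comp (t • ContinuousLinearMap.id ℝ (EuclideanSpace ℝ (Fin n)))) x :=
      (dV j (t • x)).hasFDerivAt.comp x ((hasFDerivAt_id x).const_smul t)
    have h1 : pd n l (fun y => V j (t • y)) x = t * pd n l (V j) (t • x) := by
      rw [pd, h0.fderiv]
      simp [pd]
    have h2 : pd n l (fun y => V j (t • y)) x = t^(s+1) * pd n l (V j) x := by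
      have he : (fun y => V j (t • y)) = fun y => t^(s+1) * V j y := funext fun y => hhom j t y
      rw [he, pd_cmul _ (dV j x)]
    have ht' : t ≠ 0 := ne_of_gt ht
    have h3 := h1.symm.trans h2
    apply mul_left_cancel₀ ht'
    rw [h3]; ring
  have eulerPdV : ∀ (j l : Fin n) x, ∑ m, x m * pd n m (pd n l (V j)) x
      = (s:ℝ) * pd n l (V j) x :=
    fun j l x => euler (hpdVsm j l) (fun t ht y => hpdhom j l t ht y) x
  have hpd_rad : ∀ (j : Fin n) x, V j x + ∑ l, x l * pd n j (V l) x = 0 := by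
    intro j x
    have hz : (fun y : EuclideanSpace ℝ (Fin n) => ∑ l, y l * V l y) = fun _ => (0:ℝ) :=
      funext hrad
    have h0 : pd n j (fun y => ∑ l, y l * V l y) x = 0 := by rw [hz, pd_const]
    have h1 : pd n j (fun y => ∑ l, y l * V l y) x
        = ∑ l, ((if j = l then V l x else 0) + x l * pd n j (V l) x) := by
      rw [pd_sum Finset.univ (fun l _ => (diffAt (contDiff_coord l) x).fun_mul (dV l x))]
      refine Finset.sum_congr rfl fun l _ => ?_
      rw [pd_mul (diffAt (contDiff_coord l) x) (dV l x), pd_coord]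
      by_cases h : j = l <;> simp [h]
    rw [h1, Finset.sum_add_distrib, Finset.sum_ite_eq] at h0
    simpa using h0
  have hdiv_pd : ∀ (j : Fin n) x, ∑ i, pd n i (pd n j (V i)) x = 0 := by
    intro j x
    rw [Finset.sum_congr rfl fun i _ => pd_comm (hsmooth i) i j x]
    rw [← pd_sum Finset.univ (fun i _ => diffAt (hpdVsm i i) x)]
    rw [show (fun y => ∑ i, pd n i (V i) y) = fun _ => (0:ℝ) from funext hdiv, pd_const]
  have hlap3 : ∀ (j l : Fin n) x, ∑ m, pd n m (pd n m (pd n l (V j))) x = 0 := by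
    intro j l x
    have h1 : ∀ m : Fin n, pd n m (pd n m (pd n l (V j))) x
        = pd n l (pd n m (pd n m (V j))) x := by
      intro m
      have e1 : pd n m (pd n l (V j)) = pd n l (pd n m (V j)) :=
        funext fun y => pd_comm (hsmooth j) m l y
      rw [e1]
      exact pd_comm (contDiff_pd m (hsmooth j)) m l x
    rw [Finset.sum_congr rfl fun m _ => h1 m]
    rw [← pd_sum Finset.univ (fun m _ => diffAt (contDiff_pd m (hpdVsm j m)) x)]
    rw [show (fun y => ∑ m, pd n m (pd n m (V j)) y) = fun _ => (0:ℝ) from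
          funext (fun y => hharm j y), pd_const]
  have hcq : ((q-1:ℕ):ℝ) = (q:ℝ)-1 := by
    rw [Nat.cast_sub hq]; norm_num
  constructor
  · -- divergence
    intro x j
    have hterm : ∀ i : Fin n, pd n i (fun y => W y i j) x
        = (2*(q:ℝ)*Pf n x^(q-1)) * (x i * pd n i (V j) x)
          + (2*(q:ℝ)*Pf n x^(q-1)) * (x i * pd n j (V i) x)
          + Pf n x^q * pd n i (pd n i (V j)) x
          + Pf n x^q * pd n i (pd n j (V i)) x
          + (-(s:ℝ) * (2*((q-1:ℕ):ℝ)) * Pf n x^(q-1-1) * x j) * (x i * V i x)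
          + (-(s:ℝ) * (2*((q-1:ℕ):ℝ)) * Pf n x^(q-1-1) * V j x) * (x i ^ 2)
          + (-(s:ℝ) * Pf n x^(q-1)) * (if i = j then V i x else 0)
          + (-(s:ℝ) * Pf n x^(q-1) * x j) * pd n i (V i) x
          + (-(s:ℝ) * Pf n x^(q-1)) * V j x
          + (-(s:ℝ) * Pf n x^(q-1)) * (x i * pd n i (V j) x) := by
      intro i
      have hg : ContDiff ℝ (⊤:ℕ∞) (fun y => pd n i (V j) y + pd n j (V i) y) :=
        (hpdVsm j i).add (hpdVsm i j)
      have hh : ContDiff ℝ (⊤:ℕ∞) (fun y => y j * V i y + y i * V j y) :=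
        ((contDiff_coord j).mul (hsmooth i)).add ((contDiff_coord i).mul (hsmooth j))
      have hWfun : (fun y => W y i j)
          = fun y => Pf n y ^ q * (pd n i (V j) y + pd n j (V i) y)
              - (s:ℝ) * (Pf n y ^ (q-1) * (y j * V i y + y i * V j y)) := by
        funext y
        rw [hW y i j, ← hnq y, ← hnq1 y]; ring
      rw [hWfun]
      rw [pd_sub (diffAt ((contDiff_P.pow q).mul hg) x)
           ((diffAt ((contDiff_P.pow (q-1)).mul hh) x).const_mul _),
          pd_cmul _ (diffAt ((contDiff_P.pow (q-1)).mul hh) x),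
          pd_P_pow_mul q hg i x, pd_P_pow_mul (q-1) hh i x,
          pd_add (diffAt (hpdVsm j i) x) (diffAt (hpdVsm i j) x),
          pd_add ((diffAt (contDiff_coord j) x).fun_mul (dV i x))
            ((diffAt (contDiff_coord i) x).fun_mul (dV j x)),
          pd_mul (diffAt (contDiff_coord j) x) (dV i x),
          pd_mul (diffAt (contDiff_coord i) x) (dV j x),
          pd_coord, pd_coord]
      simp only [eq_self_iff_true, if_true]
      by_cases hij : i = j <;> simp only [hij, if_true, if_false] <;> ring
    rw [Finset.sum_congr rfl fun i _ => hterm i]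
    simp only [Finset.sum_add_distrib, ← Finset.mul_sum, Finset.sum_const, Finset.card_univ,
      Fintype.card_fin, nsmul_eq_mul]
    have F1 := eulerV j x
    have F2 : ∑ i, x i * pd n j (V i) x = -V j x := by
      have := hpd_rad j x; linarith
    have F3 : ∑ i, pd n i (pd n i (V j)) x = 0 := hharm j x
    have F4 := hdiv_pd j x
    have F5 := hrad x
    have F6 : ∑ i, x i ^ 2 = Pf n x := rfl
    have F7 : ∑ i, (if i = j then V i x else 0) = V j x := by simp
    have F8 := hdiv x
    rw [F1, F2, F3, F4, F5, F6, F7, F8, hnq1 x, hcq]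
    linear_combination ((-2)*(s:ℝ)*V j x) * cast_helper2 q hq (Pf n x)
  · -- laplacian
    intro x i j
    have hg : ContDiff ℝ (⊤:ℕ∞) (fun y => pd n i (V j) y + pd n j (V i) y) :=
      (hpdVsm j i).add (hpdVsm i j)
    have hh : ContDiff ℝ (⊤:ℕ∞) (fun y => y j * V i y + y i * V j y) :=
      ((contDiff_coord j).mul (hsmooth i)).add ((contDiff_coord i).mul (hsmooth j))
    have hWfun : (fun y => W y i j)
        = fun y => Pf n y ^ q * (pd n i (V j) y + pd n j (V i) y)
            - (s:ℝ) * (Pf n y ^ (q-1) * (y j * V i y + y i * V j y)) := by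
      funext y
      rw [hW y i j, ← hnq y, ← hnq1 y]; ring
    rw [hWfun]
    rw [lap_sub_cmul ((contDiff_P.pow q).mul hg) ((contDiff_P.pow (q-1)).mul hh) (s:ℝ) x,
        lap_P_pow_mul q hg x, lap_P_pow_mul (q-1) hh x]
    -- gradient sums
    have Sg : ∑ l, x l * pd n l (fun y => pd n i (V j) y + pd n j (V i) y) x
        = (s:ℝ) * (pd n i (V j) x + pd n j (V i) x) := by
      have e : ∀ l : Fin n, pd n l (fun y => pd n i (V j) y + pd n j (V i) y) x
          = pd n l (pd n i (V j)) x + pd n l (pd n j (V i)) x :=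
        fun l => pd_add (diffAt (hpdVsm j i) x) (diffAt (hpdVsm i j) x)
      calc ∑ l, x l * pd n l (fun y => pd n i (V j) y + pd n j (V i) y) x
          = ∑ l, (x l * pd n l (pd n i (V j)) x + x l * pd n l (pd n j (V i)) x) :=
            Finset.sum_congr rfl fun l _ => by rw [e l]; ring
        _ = (s:ℝ) * (pd n i (V j) x + pd n j (V i) x) := by
            rw [Finset.sum_add_distrib, eulerPdV j i x, eulerPdV i j x]; ring
    have Lg : lap n (fun y => pd n i (V j) y + pd n j (V i) y) x = 0 := by
      have e1 : ∀ l : Fin n, pd n l (fun y => pd n i (V j) y + pd n j (V i) y)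
          = fun y => pd n l (pd n i (V j)) y + pd n l (pd n j (V i)) y :=
        fun l => funext fun y => pd_add (diffAt (hpdVsm j i) y) (diffAt (hpdVsm i j) y)
      have e2 : ∀ l : Fin n, pd n l (pd n l (fun y => pd n i (V j) y + pd n j (V i) y)) x
          = pd n l (pd n l (pd n i (V j))) x + pd n l (pd n l (pd n j (V i))) x := by
        intro l
        rw [e1 l]
        exact pd_add (diffAt (contDiff_pd l (hpdVsm j i)) x)
          (diffAt (contDiff_pd l (hpdVsm i j)) x)
      show ∑ l, pd n l (pd n l (fun y => pd n i (V j) y + pd n j (V i) y)) x = 0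
      rw [Finset.sum_congr rfl fun l _ => e2 l, Finset.sum_add_distrib,
          hlap3 j i x, hlap3 i j x]
      norm_num
    -- h function derivative as a function
    have hpdh : ∀ l : Fin n, pd n l (fun y => y j * V i y + y i * V j y)
        = fun y => ((if l = j then 1 else 0) * V i y + y j * pd n l (V i) y)
            + ((if l = i then 1 else 0) * V j y + y i * pd n l (V j) y) := by
      intro l
      funext y
      rw [pd_add ((diffAt (contDiff_coord j) y).fun_mul (dV i y))
            ((diffAt (contDiff_coord i) y).fun_mul (dV j y)),
          pd_mul (diffAt (contDiff_coord j) y) (dV i y),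
          pd_mul (diffAt (contDiff_coord i) y) (dV j y),
          pd_coord, pd_coord]
    have Sh : ∑ l, x l * pd n l (fun y => y j * V i y + y i * V j y) x
        = ((s:ℝ)+2) * (x j * V i x + x i * V j x) := by
      have e : ∀ l : Fin n, x l * pd n l (fun y => y j * V i y + y i * V j y) x
          = (if l = j then 1 else 0) * (x l * V i x) + x j * (x l * pd n l (V i) x)
            + ((if l = i then 1 else 0) * (x l * V j x) + x i * (x l * pd n l (V j) x)) := by
        intro l
        rw [hpdh l]
        ring
      rw [Finset.sum_congr rfl fun l _ => e l]
      simp only [Finset.sum_add_distrib, ← Finset.mul_sum, ite_mul, one_mul, zero_mul,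
        Finset.sum_ite_eq, Finset.sum_ite_eq', Finset.mem_univ, if_true]
      rw [eulerV i x, eulerV j x]
      ring
    have Lh : lap n (fun y => y j * V i y + y i * V j y) x
        = 2 * (pd n i (V j) x + pd n j (V i) x) := by
      have e2 : ∀ l : Fin n, pd n l (pd n l (fun y => y j * V i y + y i * V j y)) x
          = ((if l = j then 1 else 0) * pd n l (V i) x
              + ((if l = j then 1 else 0) * pd n l (V i) x + x j * pd n l (pd n l (V i)) x))
            + ((if l = i then 1 else 0) * pd n l (V j) x
              + ((if l = i then 1 else 0) * pd n l (V j) x + x i * pd n l (pd n l (V j)) x)) := by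
        intro l
        rw [hpdh l]
        rw [pd_add (((differentiableAt_const _).fun_mul (dV i x)).fun_add
              ((diffAt (contDiff_coord j) x).fun_mul (diffAt (hpdVsm i l) x)))
            (((differentiableAt_const _).fun_mul (dV j x)).fun_add
              ((diffAt (contDiff_coord i) x).fun_mul (diffAt (hpdVsm j l) x))),
            pd_add ((differentiableAt_const _).fun_mul (dV i x))
              ((diffAt (contDiff_coord j) x).fun_mul (diffAt (hpdVsm i l) x)),
            pd_add ((differentiableAt_const _).fun_mul (dV j x))
              ((diffAt (contDiff_coord i) x).fun_mul (diffAt (hpdVsm j l) x)),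
            pd_cmul _ (dV i x), pd_cmul _ (dV j x),
            pd_mul (diffAt (contDiff_coord j) x) (diffAt (hpdVsm i l) x),
            pd_mul (diffAt (contDiff_coord i) x) (diffAt (hpdVsm j l) x),
            pd_coord, pd_coord]
      show ∑ l, pd n l (pd n l (fun y => y j * V i y + y i * V j y)) x = _
      rw [Finset.sum_congr rfl fun l _ => e2 l]
      simp only [Finset.sum_add_distrib, ← Finset.mul_sum, ite_mul, one_mul, zero_mul,
        Finset.sum_ite_eq, Finset.sum_ite_eq', Finset.mem_univ, if_true]
      have G1 : ∑ l, pd n l (pd n l (V i)) x = 0 := hharm i x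
      have G2 : ∑ l, pd n l (pd n l (V j)) x = 0 := hharm j x
      rw [G1, G2]
      simp
      ring
    rw [Sg, Lg, Sh, Lh, hdiv x, hnq1 x, hcq]
    rcases eq_or_lt_of_le hq with rfl | hq2
    · norm_num
      ring
    · have hZ : ‖x‖^(2*(q:ℤ)-4) = Pf n x^(q-1-1) := by
        rw [show (2*(q:ℤ)-4) = ((2*q-4:ℕ):ℤ) by push_cast; omega]
        rw [zpow_natCast, show 2*q-4 = 2*(q-1-1) by omega, pow_mul, hn2]
      rw [hZ]
      ring
end

section
/- For homogeneous harmonic polynomials Pq, Pq' of degree s on ℝⁿ, ∫_{S^{n−1}} ∂ⱼPq ∂ⱼPq' = s(n+2s−2) ∫_{S^{n−1}} Pq Pq'. -/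
open MeasureTheory Metric

open Set Real Filter
open scoped ENNReal

/-! ### Radial integrals -/

lemma J_integrable (k : ℕ) :
    IntegrableOn (fun r : ℝ => r ^ k * Real.exp (-r ^ 2)) (Ioi 0) := by
  have h := integrableOn_rpow_mul_exp_neg_rpow (p := 2) (s := k)
    (lt_of_lt_of_le neg_one_lt_zero (Nat.cast_nonneg k)) two_pos
  refine h.congr_fun (fun x hx => ?_) measurableSet_Ioi
  beta_reduce
  rw [← Real.rpow_natCast x k, Real.rpow_two]

lemma J_pos (k : ℕ) : 0 < ∫ r in Ioi (0:ℝ), r ^ k * Real.exp (-r ^ 2) := by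
  rw [setIntegral_pos_iff_support_of_nonneg_ae]
  · have hsub : Ioi (0:ℝ) ⊆ Function.support (fun r : ℝ => r ^ k * Real.exp (-r ^ 2)) := by
      intro x hx
      have hx : (0:ℝ) < x := hx
      have : (0:ℝ) < x ^ k * Real.exp (-x ^ 2) := by positivity
      exact this.ne'
    calc (0:ℝ≥0∞) < volume (Ioi (0:ℝ)) := by simp
      _ ≤ _ := measure_mono (subset_inter hsub Subset.rfl)
  · filter_upwards [ae_restrict_mem measurableSet_Ioi] with x hx
    have hx : (0:ℝ) < x := hx
    positivity
  · exact J_integrable k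

lemma tendsto_pow_mul_exp_neg_sq (k : ℕ) :
    Tendsto (fun r : ℝ => r ^ k * Real.exp (-r ^ 2)) atTop (nhds 0) := by
  have h := rpow_mul_exp_neg_mul_sq_isLittleO_exp_neg (b := 1) one_pos (k : ℝ)
  have h2 : Tendsto (fun x : ℝ => Real.exp (-(1/2) * x)) atTop (nhds 0) := by
    have hx : Tendsto (fun x : ℝ => (1/2 : ℝ) * x) atTop atTop :=
      Tendsto.const_mul_atTop (by norm_num) tendsto_id
    have := Real.tendsto_exp_neg_atTop_nhds_zero.comp hx
    simpa [Function.comp_def, neg_mul] using this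
  have h3 := h.trans_tendsto h2
  refine h3.congr' ?_
  filter_upwards [eventually_gt_atTop (0:ℝ)] with x hx
  rw [← Real.rpow_natCast x k]
  ring_nf

lemma J_rec (k : ℕ) :
    ∫ r in Ioi (0:ℝ), r ^ (k + 2) * Real.exp (-r ^ 2)
      = ((k : ℝ) + 1) / 2 * ∫ r in Ioi (0:ℝ), r ^ k * Real.exp (-r ^ 2) := by
  set F : ℝ → ℝ := fun r => -(1/2) * (r ^ (k+1) * Real.exp (-r ^ 2)) with hF
  have hderiv : ∀ x ∈ Ici (0:ℝ), HasDerivAt F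
      (x ^ (k+2) * Real.exp (-x ^ 2) - ((k:ℝ)+1)/2 * (x ^ k * Real.exp (-x ^ 2))) x := by
    intro x _
    have h1 : HasDerivAt (fun r : ℝ => r ^ (k+1)) (((k:ℝ)+1) * x ^ k) x := by
      simpa using hasDerivAt_pow (k+1) x
    have h2 : HasDerivAt (fun r : ℝ => Real.exp (-r ^ 2)) (-(2*x) * Real.exp (-x ^ 2)) x := by
      have hx2 : HasDerivAt (fun r : ℝ => -r ^ 2) (-(2*x)) x := by
        simpa using (hasDerivAt_pow 2 x).fun_neg
      simpa [mul_comm] using hx2.exp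
    have := ((h1.fun_mul h2).const_mul (-(1/2) : ℝ))
    exact this.congr_deriv (by ring)
  have hint : IntegrableOn (fun x : ℝ =>
      x ^ (k+2) * Real.exp (-x ^ 2) - ((k:ℝ)+1)/2 * (x ^ k * Real.exp (-x ^ 2))) (Ioi 0) :=
    (J_integrable (k+2)).sub ((J_integrable k).const_mul _)
  have hlim : Tendsto F atTop (nhds 0) := by
    have := (tendsto_pow_mul_exp_neg_sq (k+1)).const_mul (-(1/2) : ℝ)
    rw [mul_zero] at this
    exact this
  have h0 := integral_Ioi_of_hasDerivAt_of_tendsto' hderiv hint hlim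
  have hF0 : F 0 = 0 := by simp [hF]
  rw [hF0, sub_zero] at h0
  have heq := integral_sub (J_integrable (k+2)) ((J_integrable k).const_mul (((k:ℝ)+1)/2))
  rw [integral_const_mul] at heq
  rw [heq] at h0
  linarith

/-! ### Polar decomposition of Gaussian-weighted integrals of homogeneous functions -/

lemma polar_aux {n : ℕ} (hn : 1 ≤ n) (g : EuclideanSpace ℝ (Fin n) → ℝ)
    (hg : Continuous g) (d : ℕ)
    (hgh : ∀ t : ℝ, 0 < t → ∀ x, g (t • x) = t ^ d * g x) :
    Integrable (fun x => g x * Real.exp (-‖x‖ ^ 2))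
      (volume : Measure (EuclideanSpace ℝ (Fin n))) ∧
    ∫ x, g x * Real.exp (-‖x‖ ^ 2) ∂(volume : Measure (EuclideanSpace ℝ (Fin n))) =
      (∫ y : sphere (0 : EuclideanSpace ℝ (Fin n)) 1, g y ∂((volume : Measure (EuclideanSpace ℝ (Fin n))).toSphere)) *
        ∫ r in Ioi (0:ℝ), r ^ (n - 1 + d) * Real.exp (-r ^ 2) := by
  have hfr : Module.finrank ℝ (EuclideanSpace ℝ (Fin n)) = n := finrank_euclideanSpace_fin
  haveI : Nontrivial (EuclideanSpace ℝ (Fin n)) :=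
    Module.nontrivial_of_finrank_pos (R := ℝ) (by rw [hfr]; omega)
  set μ : Measure (EuclideanSpace ℝ (Fin n)) := volume with hμ
  set G : EuclideanSpace ℝ (Fin n) → ℝ := fun x => g x * Real.exp (-‖x‖ ^ 2) with hG
  set F : sphere (0 : EuclideanSpace ℝ (Fin n)) 1 × Ioi (0:ℝ) → ℝ :=
    fun p => g p.1 * ((p.2 : ℝ) ^ d * Real.exp (-(p.2 : ℝ) ^ 2)) with hFdef
  have hFcomp : ∀ x : ({0}ᶜ : Set (EuclideanSpace ℝ (Fin n))),
      F (homeomorphUnitSphereProd (EuclideanSpace ℝ (Fin n)) x) = G x := by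
    rintro ⟨x, hx⟩
    have hx0 : x ≠ 0 := hx
    have hxn : (0:ℝ) < ‖x‖ := norm_pos_iff.2 hx0
    simp only [hFdef, hG, homeomorphUnitSphereProd_apply_fst_coe,
      homeomorphUnitSphereProd_apply_snd_coe]
    have := hgh ‖x‖ hxn (‖x‖⁻¹ • x)
    rw [smul_smul, mul_inv_cancel₀ hxn.ne', one_smul] at this
    rw [this]; ring
  have hg1 : Integrable (fun y : sphere (0 : EuclideanSpace ℝ (Fin n)) 1 => g y) μ.toSphere := by
    have hc : Continuous (fun y : sphere (0 : EuclideanSpace ℝ (Fin n)) 1 => g y) :=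
      hg.comp continuous_subtype_val
    have hcs : HasCompactSupport (fun y : sphere (0 : EuclideanSpace ℝ (Fin n)) 1 => g y) :=
      HasCompactSupport.of_compactSpace _
    exact hc.integrable_of_hasCompactSupport hcs
  have hmap : Integrable ((fun r : ℝ => r ^ (n-1) * (r ^ d * Real.exp (-r ^ 2)))
        ∘ (Subtype.val : Ioi (0:ℝ) → ℝ))
      (Measure.comap (Subtype.val : Ioi (0:ℝ) → ℝ) (volume : Measure ℝ)) := by
    have hJ : IntegrableOn (fun r : ℝ => r ^ (n-1) * (r ^ d * Real.exp (-r ^ 2))) (Ioi 0) := by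
      refine (J_integrable (n-1+d)).congr_fun (fun x hx => ?_) measurableSet_Ioi
      beta_reduce; rw [pow_add]; ring
    rw [IntegrableOn, ← map_comap_subtype_coe measurableSet_Ioi] at hJ
    exact (MeasurableEmbedding.subtype_coe measurableSet_Ioi).integrable_map_iff.mp hJ
  have hg2 : Integrable (fun r : Ioi (0:ℝ) => (r : ℝ) ^ d * Real.exp (-(r : ℝ) ^ 2))
      (Measure.volumeIoiPow (n-1)) := by
    rw [Measure.volumeIoiPow, integrable_withDensity_iff
      ((measurable_subtype_coe.pow_const _).ennreal_ofReal)
      (Eventually.of_forall fun _ => ENNReal.ofReal_lt_top)]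
    refine hmap.congr (Eventually.of_forall fun r => ?_)
    have hr : (0:ℝ) < r := r.2
    simp only [Function.comp_apply, ENNReal.toReal_ofReal (by positivity : (0:ℝ) ≤ (r:ℝ) ^ (n-1))]
    ring
  have hFint : Integrable F
      (μ.toSphere.prod (Measure.volumeIoiPow (Module.finrank ℝ (EuclideanSpace ℝ (Fin n)) - 1))) := by
    rw [hfr]
    exact hg1.mul_prod hg2
  have MP := μ.measurePreserving_homeomorphUnitSphereProd
  have hemb := (homeomorphUnitSphereProd (EuclideanSpace ℝ (Fin n))).measurableEmbedding
  have hcs : MeasurableSet ({0}ᶜ : Set (EuclideanSpace ℝ (Fin n))) :=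
    (measurableSet_singleton 0).compl
  have hGsub : Integrable (fun x : ({0}ᶜ : Set (EuclideanSpace ℝ (Fin n))) => G x)
      (μ.comap Subtype.val) := by
    have := (MP.integrable_comp_emb hemb).2 hFint
    exact this.congr (Eventually.of_forall fun x => hFcomp x)
  have hGint : Integrable G μ := by
    have h1 : Integrable (G ∘ Subtype.val) (Measure.comap Subtype.val μ) := hGsub
    have h2 := (MeasurableEmbedding.subtype_coe hcs).integrable_map_iff.2 h1
    rwa [map_comap_subtype_coe hcs, restrict_compl_singleton] at h2
  refine ⟨hGint, ?_⟩
  have step1 : ∫ x, G x ∂μ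
      = ∫ x : ({0}ᶜ : Set (EuclideanSpace ℝ (Fin n))), G x ∂(μ.comap Subtype.val) := by
    rw [integral_subtype_comap hcs, restrict_compl_singleton]
  have step2 : ∫ x : ({0}ᶜ : Set (EuclideanSpace ℝ (Fin n))), G x ∂(μ.comap Subtype.val)
      = ∫ p, F p ∂(μ.toSphere.prod
          (Measure.volumeIoiPow (Module.finrank ℝ (EuclideanSpace ℝ (Fin n)) - 1))) := by
    rw [← MP.integral_comp hemb F]
    exact integral_congr_ae (Eventually.of_forall fun x => (hFcomp x).symm)
  have step3 : ∫ p, F p ∂(μ.toSphere.prod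
        (Measure.volumeIoiPow (Module.finrank ℝ (EuclideanSpace ℝ (Fin n)) - 1)))
      = (∫ y : sphere (0 : EuclideanSpace ℝ (Fin n)) 1, g y ∂μ.toSphere) *
        ∫ r : Ioi (0:ℝ), ((r : ℝ) ^ d * Real.exp (-(r : ℝ) ^ 2)) ∂(Measure.volumeIoiPow (n-1)) := by
    rw [hfr]
    simp only [hFdef]
    exact integral_prod_mul (fun y : sphere (0 : EuclideanSpace ℝ (Fin n)) 1 => g y)
      (fun r : Ioi (0:ℝ) => (r : ℝ) ^ d * Real.exp (-(r : ℝ) ^ 2))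
  have step4 : ∫ r : Ioi (0:ℝ), ((r : ℝ) ^ d * Real.exp (-(r : ℝ) ^ 2)) ∂(Measure.volumeIoiPow (n-1))
      = ∫ r in Ioi (0:ℝ), r ^ (n - 1 + d) * Real.exp (-r ^ 2) := by
    simp only [Measure.volumeIoiPow, ENNReal.ofReal]
    rw [integral_withDensity_eq_integral_smul
      ((measurable_subtype_coe.pow_const _).real_toNNReal),
      integral_subtype_comap measurableSet_Ioi
        (fun a : ℝ => Real.toNNReal (a ^ (n-1)) • (a ^ d * Real.exp (-a ^ 2)))]
    refine setIntegral_congr_fun measurableSet_Ioi fun x hx => ?_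
    have hx : (0:ℝ) < x := hx
    rw [NNReal.smul_def, Real.coe_toNNReal _ (by positivity), smul_eq_mul, pow_add]
    ring
  rw [step1, step2, step3, step4]

/-! ### Calculus lemmas -/

noncomputable def wt (n : ℕ) (x : EuclideanSpace ℝ (Fin n)) : ℝ := Real.exp (-‖x‖ ^ 2)

section Calc
variable {n : ℕ}

lemma pd_contDiff {f : EuclideanSpace ℝ (Fin n) → ℝ} (hf : ContDiff ℝ (⊤:ℕ∞) f) (j : Fin n) :
    ContDiff ℝ (⊤:ℕ∞) (pd n j f) := by
  have h1 : ContDiff ℝ (⊤:ℕ∞) (fderiv ℝ f) := hf.fderiv_right (by exact_mod_cast le_top)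
  exact (ContinuousLinearMap.apply ℝ ℝ (EuclideanSpace.single j 1)).contDiff.comp h1

lemma euclid_sum (x : EuclideanSpace ℝ (Fin n)) :
    ∑ j, x j • EuclideanSpace.single j (1:ℝ) = x := by
  simpa [EuclideanSpace.basisFun_apply, EuclideanSpace.basisFun_repr]
    using (EuclideanSpace.basisFun (Fin n) ℝ).sum_repr x

lemma fderiv_apply_eq_sum {f : EuclideanSpace ℝ (Fin n) → ℝ} (x : EuclideanSpace ℝ (Fin n)) :
    fderiv ℝ f x x = ∑ j, x j * pd n j f x := by
  have h : fderiv ℝ f x x = fderiv ℝ f x (∑ j, x j • EuclideanSpace.single j (1:ℝ)) := by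
    rw [euclid_sum]
  rw [h, map_sum]
  simp [pd, smul_eq_mul]

lemma euler_s17 {s : ℕ} {f : EuclideanSpace ℝ (Fin n) → ℝ} (hf : ContDiff ℝ (⊤:ℕ∞) f)
    (hfh : ∀ (t : ℝ) x, f (t • x) = t ^ s * f x) (x : EuclideanSpace ℝ (Fin n)) :
    ∑ j, x j * pd n j f x = s * f x := by
  have hdiff := hf.differentiable (by simp)
  have hsm : HasDerivAt (fun t : ℝ => t • x) x 1 := by
    simpa using (hasDerivAt_id (1:ℝ)).smul_const x
  have h1 : HasDerivAt (fun t : ℝ => f (t • x)) (fderiv ℝ f ((1:ℝ) • x) x) 1 :=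
    (hdiff ((1:ℝ) • x)).hasFDerivAt.comp_hasDerivAt 1 hsm
  have h2 : HasDerivAt (fun t : ℝ => t ^ s * f x) ((s * 1 ^ (s-1)) * f x) 1 :=
    (hasDerivAt_pow s 1).mul_const (f x)
  have h2' : HasDerivAt (fun t : ℝ => f (t • x)) ((s * 1 ^ (s-1)) * f x) 1 := by
    refine h2.congr_of_eventuallyEq (Eventually.of_forall fun t => ?_)
    exact hfh t x
  have hu := h1.unique h2'
  rw [one_smul] at hu
  rw [← fderiv_apply_eq_sum x, hu]
  simp

lemma pd_homog {d : ℕ} {f : EuclideanSpace ℝ (Fin n) → ℝ} (hf : ContDiff ℝ (⊤:ℕ∞) f)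
    (hfh : ∀ t : ℝ, 0 < t → ∀ x, f (t • x) = t ^ d * f x) (j : Fin n)
    {t : ℝ} (ht : 0 < t) (x : EuclideanSpace ℝ (Fin n)) :
    t * pd n j f (t • x) = t ^ d * pd n j f x := by
  have hdiff := hf.differentiable (by simp)
  set L : EuclideanSpace ℝ (Fin n) →L[ℝ] EuclideanSpace ℝ (Fin n) :=
    t • ContinuousLinearMap.id ℝ (EuclideanSpace ℝ (Fin n)) with hLdef
  have hL : ∀ y, L y = t • y := fun y => rfl
  have h1 : HasFDerivAt (fun y => f (t • y)) ((fderiv ℝ f (t • x)).comp L) x := by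
    have h := (hdiff (t • x)).hasFDerivAt.comp x L.hasFDerivAt
    exact h
  have h2 : HasFDerivAt (fun y => t ^ d * f y) ((t ^ d) • fderiv ℝ f x) x :=
    ((hdiff x).hasFDerivAt.const_mul (t ^ d))
  have h12 : HasFDerivAt (fun y => f (t • y)) ((t ^ d) • fderiv ℝ f x) x := by
    refine h2.congr_of_eventuallyEq (Eventually.of_forall fun y => ?_)
    exact hfh t ht y
  have hu := h1.unique h12
  have happ := congrArg (fun A : EuclideanSpace ℝ (Fin n) →L[ℝ] ℝ =>
    A (EuclideanSpace.single j 1)) hu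
  simp only [ContinuousLinearMap.comp_apply, ContinuousLinearMap.coe_smul',
    Pi.smul_apply, smul_eq_mul] at happ
  have : L (EuclideanSpace.single j 1) = t • EuclideanSpace.single j 1 := hL _
  rw [this, ContinuousLinearMap.map_smul] at happ
  simpa [pd, smul_eq_mul] using happ

lemma pd_homog' {s : ℕ} (hs : 1 ≤ s) {f : EuclideanSpace ℝ (Fin n) → ℝ}
    (hf : ContDiff ℝ (⊤:ℕ∞) f)
    (hfh : ∀ t : ℝ, 0 < t → ∀ x, f (t • x) = t ^ s * f x) (j : Fin n)
    {t : ℝ} (ht : 0 < t) (x : EuclideanSpace ℝ (Fin n)) :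
    pd n j f (t • x) = t ^ (s-1) * pd n j f x := by
  have h := pd_homog hf hfh j ht x
  have hts : t ^ s = t * t ^ (s - 1) := by
    rw [← pow_succ']
    congr 1
    omega
  rw [hts, mul_assoc] at h
  exact mul_left_cancel₀ (ne_of_gt ht) h

lemma wt_contDiff : ContDiff ℝ (⊤:ℕ∞) (wt n) :=
  Real.contDiff_exp.comp (contDiff_norm_sq ℝ).neg

lemma wt_pd (j : Fin n) (x : EuclideanSpace ℝ (Fin n)) :
    pd n j (wt n) x = -(2 * x j) * wt n x := by
  have h1 : HasFDerivAt (fun y : EuclideanSpace ℝ (Fin n) => -‖y‖ ^ 2)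
      (-(2 • (innerSL ℝ x))) x := (hasStrictFDerivAt_norm_sq x).hasFDerivAt.neg
  have h2 := h1.exp
  have h3 : pd n j (wt n) x
      = (Real.exp (-‖x‖ ^ 2) • -((2:ℕ) • (innerSL ℝ) x)) (EuclideanSpace.single j 1) := by
    rw [pd]
    congr 1
    exact HasFDerivAt.fderiv h2
  rw [h3]
  simp [wt, EuclideanSpace.inner_single_right]
  ring

lemma sphere_integrable (f : EuclideanSpace ℝ (Fin n) → ℝ) (hf : Continuous f) :
    Integrable (fun y : sphere (0 : EuclideanSpace ℝ (Fin n)) 1 => f y)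
      ((volume : Measure (EuclideanSpace ℝ (Fin n))).toSphere) := by
  have hc : Continuous (fun y : sphere (0 : EuclideanSpace ℝ (Fin n)) 1 => f y) :=
    hf.comp continuous_subtype_val
  exact hc.integrable_of_hasCompactSupport (HasCompactSupport.of_compactSpace _)

end Calc

/-- For homogeneous harmonic polynomials `P`, `P'` of degree `s` on `ℝⁿ`,
`∫_{S^{n−1}} ∂ⱼP ∂ⱼP' = s(n+2s−2) ∫_{S^{n−1}} P P'` (sum over `j`, integrals with the
standard surface measure of the unit sphere). -/
theorem sphere_integral_grad_harmonic (n s : ℕ) (hn : 2 ≤ n) (hs : 1 ≤ s)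
    (P P' : EuclideanSpace ℝ (Fin n) → ℝ)
    (hP : ContDiff ℝ (⊤ : ℕ∞) P) (hP' : ContDiff ℝ (⊤ : ℕ∞) P')
    (hPhom : ∀ (t : ℝ) (x : EuclideanSpace ℝ (Fin n)), P (t • x) = t ^ s * P x)
    (hP'hom : ∀ (t : ℝ) (x : EuclideanSpace ℝ (Fin n)), P' (t • x) = t ^ s * P' x)
    (hPharm : ∀ x, lap n P x = 0) (hP'harm : ∀ x, lap n P' x = 0) :
    ∫ y : sphere (0 : EuclideanSpace ℝ (Fin n)) 1,
        (∑ j, pd n j P (y : EuclideanSpace ℝ (Fin n)) * pd n j P' (y : EuclideanSpace ℝ (Fin n)))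
        ∂((volume : Measure (EuclideanSpace ℝ (Fin n))).toSphere)
      = (s : ℝ) * ((n : ℝ) + 2 * (s : ℝ) - 2) *
        ∫ y : sphere (0 : EuclideanSpace ℝ (Fin n)) 1,
          P (y : EuclideanSpace ℝ (Fin n)) * P' (y : EuclideanSpace ℝ (Fin n))
          ∂((volume : Measure (EuclideanSpace ℝ (Fin n))).toSphere) := by
  classical
  have hn1 : 1 ≤ n := by omega
  have hcast : ((⊤:ℕ∞) : WithTop ℕ∞) ≠ 0 := by simp
  have hPdiff : Differentiable ℝ P := hP.differentiable hcast
  have hP'diff : Differentiable ℝ P' := hP'.differentiable hcast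
  -- continuity of everything in sight
  have hPc : Continuous P := hP.continuous
  have hP'c : Continuous P' := hP'.continuous
  have hpdPc : ∀ j, Continuous (pd n j P) := fun j => (pd_contDiff hP j).continuous
  have hpdP'c : ∀ j, Continuous (pd n j P') := fun j => (pd_contDiff hP' j).continuous
  have hpdpdc : ∀ j, Continuous (pd n j (pd n j P')) :=
    fun j => (pd_contDiff (pd_contDiff hP' j) j).continuous
  -- homogeneity of derivatives
  have hpdP : ∀ (j : Fin n) {t : ℝ}, 0 < t → ∀ x, pd n j P (t • x) = t ^ (s-1) * pd n j P x :=
    fun j t ht x => pd_homog' hs hP (fun t _ x => hPhom t x) j ht x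
  have hpdP' : ∀ (j : Fin n) {t : ℝ}, 0 < t → ∀ x, pd n j P' (t • x) = t ^ (s-1) * pd n j P' x :=
    fun j t ht x => pd_homog' hs hP' (fun t _ x => hP'hom t x) j ht x
  have hpdpd : ∀ (j : Fin n) {t : ℝ}, 0 < t → ∀ x,
      t * pd n j (pd n j P') (t • x) = t ^ (s-1) * pd n j (pd n j P') x :=
    fun j t ht x => pd_homog (pd_contDiff hP' j) (fun t ht x => hpdP' j ht x) j ht x
  -- the three (four) homogeneous integrands
  have hom1 : ∀ (j : Fin n) (t : ℝ), 0 < t → ∀ x,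
      pd n j P (t • x) * pd n j P' (t • x) = t ^ (2*s-2) * (pd n j P x * pd n j P' x) := by
    intro j t ht x
    rw [hpdP j ht x, hpdP' j ht x, mul_mul_mul_comm, ← pow_add]
    congr 2
    omega
  have hom2 : ∀ (j : Fin n) (t : ℝ), 0 < t → ∀ x,
      P (t • x) * pd n j (pd n j P') (t • x)
        = t ^ (2*s-2) * (P x * pd n j (pd n j P') x) := by
    intro j t ht x
    have h := hpdpd j ht x
    apply mul_left_cancel₀ (ne_of_gt ht)
    calc t * (P (t • x) * pd n j (pd n j P') (t • x))
        = P (t • x) * (t * pd n j (pd n j P') (t • x)) := by ring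
      _ = t ^ s * P x * (t ^ (s-1) * pd n j (pd n j P') x) := by rw [hPhom, h]
      _ = (t ^ s * t ^ (s-1)) * (P x * pd n j (pd n j P') x) := by ring
      _ = (t * t ^ (2*s-2)) * (P x * pd n j (pd n j P') x) := by
          rw [← pow_add, ← pow_succ']
          congr 2
          omega
      _ = t * (t ^ (2*s-2) * (P x * pd n j (pd n j P') x)) := by ring
  have hom3 : ∀ (j : Fin n) (t : ℝ), 0 < t → ∀ x,
      (t • x) j * (P (t • x) * pd n j P' (t • x))
        = t ^ (2*s) * (x j * (P x * pd n j P' x)) := by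
    intro j t ht x
    have hxj : (t • x) j = t * x j := rfl
    rw [hxj, hPhom, hpdP' j ht x]
    have hpow : t * t ^ s * t ^ (s-1) = t ^ (2*s) := by
      rw [mul_assoc, ← pow_add, ← pow_succ']
      congr 1
      omega
    have : t * x j * (t ^ s * P x * (t ^ (s-1) * pd n j P' x))
        = (t * t ^ s * t ^ (s-1)) * (x j * (P x * pd n j P' x)) := by ring
    rw [this, hpow]
  have hom4 : ∀ (j : Fin n) (t : ℝ), 0 < t → ∀ x,
      P (t • x) * pd n j P' (t • x) = t ^ (2*s-1) * (P x * pd n j P' x) := by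
    intro j t ht x
    rw [hPhom, hpdP' j ht x, mul_mul_mul_comm, ← pow_add]
    congr 2
    omega
  -- sphere integrals
  set μ : Measure (EuclideanSpace ℝ (Fin n)) := volume with hμdef
  set K1 : ℝ := ∫ r in Ioi (0:ℝ), r ^ (n - 1 + (2*s-2)) * Real.exp (-r ^ 2) with hK1
  set K2 : ℝ := ∫ r in Ioi (0:ℝ), r ^ (n - 1 + 2*s) * Real.exp (-r ^ 2) with hK2
  set S : Fin n → ℝ := fun j => ∫ y : sphere (0 : EuclideanSpace ℝ (Fin n)) 1,
    (pd n j P y * pd n j P' y) ∂μ.toSphere with hSdef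
  set T : Fin n → ℝ := fun j => ∫ y : sphere (0 : EuclideanSpace ℝ (Fin n)) 1,
    ((y : EuclideanSpace ℝ (Fin n)) j * (P y * pd n j P' y)) ∂μ.toSphere with hTdef
  set U : Fin n → ℝ := fun j => ∫ y : sphere (0 : EuclideanSpace ℝ (Fin n)) 1,
    (P y * pd n j (pd n j P') y) ∂μ.toSphere with hUdef
  -- Integration by parts for each coordinate
  have key : ∀ j : Fin n, U j * K1 + (-2) * (T j * K2) = -(S j * K1) := by
    intro j
    obtain ⟨i1, e1⟩ := polar_aux hn1 (fun x => pd n j P x * pd n j P' x)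
      ((hpdPc j).mul (hpdP'c j)) (2*s-2) (hom1 j)
    obtain ⟨i2, e2⟩ := polar_aux hn1 (fun x => P x * pd n j (pd n j P') x)
      (hPc.mul (hpdpdc j)) (2*s-2) (hom2 j)
    obtain ⟨i3, e3⟩ := polar_aux hn1 (fun x => x j * (P x * pd n j P' x))
      (((continuous_apply j).comp (PiLp.continuous_ofLp 2 _)).mul (hPc.mul (hpdP'c j))) (2*s)
      (hom3 j)
    obtain ⟨i4, e4⟩ := polar_aux hn1 (fun x => P x * pd n j P' x)
      (hPc.mul (hpdP'c j)) (2*s-1) (hom4 j)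
    have hgdiff : Differentiable ℝ (fun x => pd n j P' x * wt n x) :=
      ((pd_contDiff hP' j).differentiable hcast).mul (wt_contDiff.differentiable hcast)
    have hgderiv : ∀ x, fderiv ℝ (fun x => pd n j P' x * wt n x) x (EuclideanSpace.single j 1)
        = pd n j (pd n j P') x * wt n x + (-(2 * x j)) * (pd n j P' x * wt n x) := by
      intro x
      have hd1 : DifferentiableAt ℝ (pd n j P') x := (pd_contDiff hP' j).differentiable hcast x
      have hd2 : DifferentiableAt ℝ (wt n) x := wt_contDiff.differentiable hcast x
      rw [fderiv_fun_mul hd1 hd2]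
      simp only [ContinuousLinearMap.add_apply, ContinuousLinearMap.coe_smul',
        Pi.smul_apply, smul_eq_mul]
      rw [show fderiv ℝ (wt n) x (EuclideanSpace.single j 1) = -(2 * x j) * wt n x
        from wt_pd j x]
      rw [show fderiv ℝ (pd n j P') x (EuclideanSpace.single j 1) = pd n j (pd n j P') x
        from rfl]
      ring
    have h1 : Integrable (fun x => fderiv ℝ P x (EuclideanSpace.single j 1)
        * (pd n j P' x * wt n x)) μ := by
      refine i1.congr (Eventually.of_forall fun x => ?_)
      show pd n j P x * pd n j P' x * Real.exp (-‖x‖ ^ 2)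
        = fderiv ℝ P x (EuclideanSpace.single j 1) * (pd n j P' x * wt n x)
      rw [show fderiv ℝ P x (EuclideanSpace.single j 1) = pd n j P x from rfl, wt]
      ring
    have h3 : Integrable (fun x => P x * (pd n j P' x * wt n x)) μ := by
      refine i4.congr (Eventually.of_forall fun x => ?_)
      show P x * pd n j P' x * Real.exp (-‖x‖ ^ 2) = P x * (pd n j P' x * wt n x)
      rw [wt]
      ring
    have h2 : Integrable (fun x => P x
        * fderiv ℝ (fun x => pd n j P' x * wt n x) x (EuclideanSpace.single j 1)) μ := by
      refine (i2.add (i3.const_mul (-2))).congr (Eventually.of_forall fun x => ?_)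
      simp only [Pi.add_apply]
      beta_reduce
      rw [hgderiv x, wt]
      ring
    have ibp := integral_mul_fderiv_eq_neg_fderiv_mul_of_integrable h1 h2 h3 (fun x _ => hPdiff x) (fun x _ => hgdiff x)
    have lhs_eq : ∫ x, P x
        * fderiv ℝ (fun x => pd n j P' x * wt n x) x (EuclideanSpace.single j 1) ∂μ
        = U j * K1 + (-2) * (T j * K2) := by
      have congr1 : ∫ x, P x
          * fderiv ℝ (fun x => pd n j P' x * wt n x) x (EuclideanSpace.single j 1) ∂μ
          = ∫ x, ((P x * pd n j (pd n j P') x) * Real.exp (-‖x‖ ^ 2)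
              + (-2) * ((x j * (P x * pd n j P' x)) * Real.exp (-‖x‖ ^ 2))) ∂μ := by
        refine integral_congr_ae (Eventually.of_forall fun x => ?_)
        beta_reduce
        rw [hgderiv x, wt]
        ring
      rw [congr1, integral_add i2 (i3.const_mul (-2)), integral_const_mul, e2, e3]
    have rhs_eq : ∫ x, fderiv ℝ P x (EuclideanSpace.single j 1) * (pd n j P' x * wt n x) ∂μ
        = S j * K1 := by
      have congr2 : ∫ x, fderiv ℝ P x (EuclideanSpace.single j 1) * (pd n j P' x * wt n x) ∂μ
          = ∫ x, (pd n j P x * pd n j P' x) * Real.exp (-‖x‖ ^ 2) ∂μ := by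
        refine integral_congr_ae (Eventually.of_forall fun x => ?_)
        beta_reduce
        rw [show fderiv ℝ P x (EuclideanSpace.single j 1) = pd n j P x from rfl, wt]
        ring
      rw [congr2, e1]
    rw [lhs_eq, rhs_eq] at ibp
    linarith [ibp]
  -- sum the identities over j
  have keysum : (∑ j, U j) * K1 + (-2) * ((∑ j, T j) * K2) = -((∑ j, S j) * K1) := by
    have e : ∑ j, (U j * K1 + (-2) * (T j * K2))
        = (∑ j, U j) * K1 + (-2) * ((∑ j, T j) * K2) := by
      rw [Finset.sum_add_distrib, ← Finset.sum_mul, ← Finset.mul_sum, ← Finset.sum_mul]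
    have e' : ∑ j : Fin n, -(S j * K1) = -((∑ j, S j) * K1) := by
      rw [Finset.sum_neg_distrib, ← Finset.sum_mul]
    rw [← e, ← e']
    exact Finset.sum_congr rfl (fun j _ => key j)
  -- identify the three sums
  have hUsum : (∑ j, U j) = 0 := by
    rw [hUdef]
    beta_reduce
    rw [← integral_finset_sum Finset.univ
      (fun j _ => sphere_integrable (fun x => P x * pd n j (pd n j P') x) (hPc.mul (hpdpdc j)))]
    have hz : ∀ y : sphere (0 : EuclideanSpace ℝ (Fin n)) 1,
        (∑ j, P (y : EuclideanSpace ℝ (Fin n)) * pd n j (pd n j P') (y : EuclideanSpace ℝ (Fin n)))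
          = 0 := by
      intro y
      rw [← Finset.mul_sum]
      rw [show (∑ j, pd n j (pd n j P') (y : EuclideanSpace ℝ (Fin n)))
        = lap n P' (y : EuclideanSpace ℝ (Fin n)) from rfl]
      rw [hP'harm]
      ring
    rw [integral_congr_ae (Eventually.of_forall hz), integral_zero]
  have hTsum : (∑ j, T j)
      = (s : ℝ) * ∫ y : sphere (0 : EuclideanSpace ℝ (Fin n)) 1,
          P (y : EuclideanSpace ℝ (Fin n)) * P' (y : EuclideanSpace ℝ (Fin n)) ∂μ.toSphere := by
    rw [hTdef]
    beta_reduce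
    rw [← integral_finset_sum Finset.univ (fun j _ => sphere_integrable
      (fun x : EuclideanSpace ℝ (Fin n) => x j * (P x * pd n j P' x))
      (Continuous.mul
        (by exact (continuous_apply j).comp (PiLp.continuous_ofLp 2 (fun _ : Fin n => ℝ)))
        (hPc.mul (hpdP'c j))))]
    have he : ∀ y : sphere (0 : EuclideanSpace ℝ (Fin n)) 1,
        (∑ j, (y : EuclideanSpace ℝ (Fin n)) j
            * (P (y : EuclideanSpace ℝ (Fin n)) * pd n j P' (y : EuclideanSpace ℝ (Fin n))))
          = (s : ℝ) * (P (y : EuclideanSpace ℝ (Fin n)) * P' (y : EuclideanSpace ℝ (Fin n))) := by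
      intro y
      have heuler := euler_s17 hP' hP'hom (y : EuclideanSpace ℝ (Fin n))
      calc (∑ j, (y : EuclideanSpace ℝ (Fin n)) j
            * (P (y : EuclideanSpace ℝ (Fin n)) * pd n j P' (y : EuclideanSpace ℝ (Fin n))))
          = P (y : EuclideanSpace ℝ (Fin n)) * (∑ j, (y : EuclideanSpace ℝ (Fin n)) j
              * pd n j P' (y : EuclideanSpace ℝ (Fin n))) := by
            rw [Finset.mul_sum]
            exact Finset.sum_congr rfl fun j _ => by ring
        _ = P (y : EuclideanSpace ℝ (Fin n))
              * ((s : ℝ) * P' (y : EuclideanSpace ℝ (Fin n))) := by rw [heuler]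
        _ = (s : ℝ) * (P (y : EuclideanSpace ℝ (Fin n)) * P' (y : EuclideanSpace ℝ (Fin n))) := by
            ring
    rw [integral_congr_ae (Eventually.of_forall he), integral_const_mul]
  have hSsum : (∑ j, S j)
      = ∫ y : sphere (0 : EuclideanSpace ℝ (Fin n)) 1,
          (∑ j, pd n j P (y : EuclideanSpace ℝ (Fin n))
            * pd n j P' (y : EuclideanSpace ℝ (Fin n))) ∂μ.toSphere := by
    rw [hSdef]
    beta_reduce
    rw [← integral_finset_sum Finset.univ
      (fun j _ => sphere_integrable (fun x => pd n j P x * pd n j P' x) ((hpdPc j).mul (hpdP'c j)))]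
  -- the radial factor identity
  have hKrel : K2 = (((n : ℝ) + 2 * (s : ℝ) - 2) / 2) * K1 := by
    rw [hK1, hK2]
    rw [show n - 1 + 2*s = (n + 2*s - 3) + 2 by omega,
      show n - 1 + (2*s - 2) = n + 2*s - 3 by omega, J_rec (n + 2*s - 3)]
    have h3 : (3 : ℕ) ≤ n + 2*s := by omega
    have hc : ((n + 2*s - 3 : ℕ) : ℝ) = (n : ℝ) + 2*(s : ℝ) - 3 := by
      rw [Nat.cast_sub h3]
      push_cast
      ring
    rw [hc]
    ring_nf
  have hK1pos : 0 < K1 := by rw [hK1]; exact J_pos _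
  -- put everything together
  rw [hUsum, hTsum, hSsum, hKrel] at keysum
  have hfin : (∫ y : sphere (0 : EuclideanSpace ℝ (Fin n)) 1,
        (∑ j, pd n j P (y : EuclideanSpace ℝ (Fin n))
          * pd n j P' (y : EuclideanSpace ℝ (Fin n))) ∂μ.toSphere)
      = (s : ℝ) * ((n : ℝ) + 2 * (s : ℝ) - 2) *
        ∫ y : sphere (0 : EuclideanSpace ℝ (Fin n)) 1,
          P (y : EuclideanSpace ℝ (Fin n)) * P' (y : EuclideanSpace ℝ (Fin n)) ∂μ.toSphere := by
    apply mul_right_cancel₀ (ne_of_gt hK1pos)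
    linear_combination keysum
  exact hfin
end
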